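/- arXiv:math/0505214 — 9 statements merged into one kernel-verified Lean document; each statement's English description precedes it below -/
import Mathlib

section
/- Let t > 0. The closure of S^t in the normed space (Ω, ‖·‖_Ω) is exactly the set {f ∈ Ω : for all s ∈ (0,t), f(−s) − f(−t) ≥ b + c₂t − c₁s}. -/
/-!
The path space Ω of the paper consists of the continuous ω : ℝ → ℝ with ω 0 = 0 and
ω t / (1 + |t|) → 0 as t → ±∞, normed by ‖ω‖_Ω = sup_t |ω t| / (1 + |t|).
Via the isometric bijection g t = ω t / (1 + |t|), the normed space (Ω, ‖·‖_Ω) is exactly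
the subspace {g ∈ C₀(ℝ, ℝ) : g 0 = 0} of the space of continuous functions vanishing at
infinity with the sup norm; the path value is recovered as ω t = g t * (1 + |t|).
-/

open Set
open scoped ZeroAtInfty

/-- The path space Ω, realized isometrically inside `C₀(ℝ, ℝ)`. -/
def OmegaSpace : Set C₀(ℝ, ℝ) := {g | g 0 = 0}

/-- The value ω(t) of the path ω ∈ Ω represented by `g`. -/
noncomputable def pathVal (g : OmegaSpace) (t : ℝ) : ℝ := (g : C₀(ℝ, ℝ)) t * (1 + |t|)

/-- The set `S^t` of paths: for all s ∈ (0,t), f(−s) − f(−t) > b + c₂t − c₁s. -/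
def St (b c₁ c₂ t : ℝ) : Set OmegaSpace :=
  {f | ∀ s ∈ Ioo (0 : ℝ) t, pathVal f (-s) - pathVal f (-t) > b + c₂ * t - c₁ * s}

/-- A continuous bump supported in `[-t, 0]`, positive on `(-t, 0)`. -/
noncomputable def ClosureStAux.bump (t : ℝ) : C₀(ℝ, ℝ) :=
  ⟨⟨fun u => max 0 (min (u + t) (-u)), by fun_prop⟩, by
    have h0 : ∀ u : ℝ, u ∉ Icc (-t) 0 → max 0 (min (u + t) (-u)) = 0 := by
      intro u hu
      rw [mem_Icc, not_and_or] at hu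
      rcases hu with h | h
      · push_neg at h
        exact max_eq_left (le_trans (min_le_left _ _) (by linarith))
      · push_neg at h
        exact max_eq_left (le_trans (min_le_right _ _) (by linarith))
    refine Filter.Tendsto.congr' ?_ tendsto_const_nhds
    filter_upwards [Filter.mem_cocompact.2 ⟨Icc (-t) 0, isCompact_Icc, subset_rfl⟩] with u hu
    exact (h0 u hu).symm⟩

theorem ClosureStAux.continuous_pathVal (x : ℝ) :
    Continuous (fun f : OmegaSpace => pathVal f x) := by
  have h : Continuous (fun f : C₀(ℝ, ℝ) => f x) :=
    (continuous_eval_const x : Continuous fun f : BoundedContinuousFunction ℝ ℝ => f x).comp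
      ZeroAtInftyContinuousMap.isometry_toBCF.continuous
  exact (h.comp continuous_subtype_val).mul continuous_const

/-- Equation (32) of the paper: the closure of `S^t` in (Ω, ‖·‖_Ω) is the set of paths
satisfying the corresponding weak inequalities. -/
theorem closure_St (b c₁ c₂ t : ℝ) (hb : 0 < b) (hc₂ : 0 < c₂) (hc : c₂ < c₁) (ht : 0 < t) :
    closure (St b c₁ c₂ t) =
      {f : OmegaSpace | ∀ s ∈ Ioo (0 : ℝ) t,
        pathVal f (-s) - pathVal f (-t) ≥ b + c₂ * t - c₁ * s} := by
  apply Subset.antisymm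
  · -- closure ⊆ weak set: the weak set is closed and contains St
    have hclosed : IsClosed {f : OmegaSpace | ∀ s ∈ Ioo (0 : ℝ) t,
        pathVal f (-s) - pathVal f (-t) ≥ b + c₂ * t - c₁ * s} := by
      have : {f : OmegaSpace | ∀ s ∈ Ioo (0 : ℝ) t,
          pathVal f (-s) - pathVal f (-t) ≥ b + c₂ * t - c₁ * s}
          = ⋂ s ∈ Ioo (0 : ℝ) t,
            {f : OmegaSpace | pathVal f (-s) - pathVal f (-t) ≥ b + c₂ * t - c₁ * s} := by
        ext f; simp [mem_iInter]
      rw [this]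
      exact isClosed_biInter fun s _ => isClosed_le continuous_const
        ((ClosureStAux.continuous_pathVal (-s)).sub (ClosureStAux.continuous_pathVal (-t)))
    exact closure_minimal (fun f hf s hs => le_of_lt (hf s hs)) hclosed
  · -- weak set ⊆ closure: approximate by f + εₙ • bump
    intro f hf
    set g : C₀(ℝ, ℝ) := ClosureStAux.bump t with hg
    have hg0 : g 0 = 0 := by
      simp only [hg, ClosureStAux.bump, ZeroAtInftyContinuousMap.coe_mk, ContinuousMap.coe_mk]
      simp [min_eq_right ht.le]
    have hgt : g (-t) = 0 := by
      simp only [hg, ClosureStAux.bump, ZeroAtInftyContinuousMap.coe_mk, ContinuousMap.coe_mk]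
      simp [min_eq_left ht.le]
    have hgs : ∀ s ∈ Ioo (0 : ℝ) t, 0 < g (-s) := by
      intro s hs
      simp only [hg, ClosureStAux.bump, ZeroAtInftyContinuousMap.coe_mk, ContinuousMap.coe_mk]
      have h1 : (0 : ℝ) < min (-s + t) (-(-s)) := by
        rcases hs with ⟨h1, h2⟩
        simp only [neg_neg, lt_min_iff]
        constructor <;> linarith
      rw [max_eq_right h1.le]; exact h1
    -- the approximating sequence
    set u : ℕ → OmegaSpace := fun n =>
      ⟨(f : C₀(ℝ, ℝ)) + ((n : ℝ) + 1)⁻¹ • g, by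
        have hf0 : (f : C₀(ℝ, ℝ)) 0 = 0 := f.2
        simp [OmegaSpace, hf0, hg0]⟩ with hu
    have hmem : ∀ n, u n ∈ St b c₁ c₂ t := by
      intro n s hs
      have hε : (0 : ℝ) < ((n : ℝ) + 1)⁻¹ := by positivity
      have hval : ∀ x : ℝ, pathVal (u n) x = pathVal f x + ((n : ℝ) + 1)⁻¹ * g x * (1 + |x|) := by
        intro x
        simp [hu, pathVal]
        ring
      rw [hval, hval, hgt]
      have h1 : 0 < ((n : ℝ) + 1)⁻¹ * g (-s) * (1 + |(-s)|) := by
        have := hgs s hs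
        have habs : 0 < 1 + |(-s)| := by positivity
        positivity
      have h2 := hf s hs
      simp only [mul_zero, zero_mul, sub_zero] at *
      linarith
    have htend : Filter.Tendsto u Filter.atTop (nhds f) := by
      rw [tendsto_subtype_rng]
      have h1 : Filter.Tendsto (fun n : ℕ => ((n : ℝ) + 1)⁻¹) Filter.atTop (nhds 0) :=
        tendsto_one_div_add_atTop_nhds_zero_nat.congr (by intro n; rw [one_div])
      have h2 : Filter.Tendsto (fun n : ℕ => ((n : ℝ) + 1)⁻¹ • g) Filter.atTop (nhds 0) := by
        have := h1.smul_const g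
        rwa [zero_smul] at this
      have h3 := (tendsto_const_nhds (x := (f : C₀(ℝ, ℝ))) (f := (Filter.atTop : Filter ℕ))).add h2
      rwa [add_zero] at h3
    exact mem_closure_of_tendsto htend (Filter.Eventually.of_forall hmem)
end

section
/- The closure of S in the normed space (Ω, ‖·‖_Ω) equals the union over t ≥ t₀ of the sets {f ∈ Ω : for all s ∈ (0,t), f(−s) − f(−t) ≥ b + c₂t − c₁s} (each such set being the closure of S^t). -/
/-!
The path space Ω of the paper consists of the continuous ω : ℝ → ℝ with ω 0 = 0 and
ω t / (1 + |t|) → 0 as t → ±∞, normed by ‖ω‖_Ω = sup_t |ω t| / (1 + |t|).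
Via the isometric bijection g t = ω t / (1 + |t|), the normed space (Ω, ‖·‖_Ω) is exactly
the subspace {g ∈ C₀(ℝ, ℝ) : g 0 = 0} of the space of continuous functions vanishing at
infinity with the sup norm; the path value is recovered as ω t = g t * (1 + |t|).
-/

open Set
open scoped ZeroAtInfty

open Filter Topology

lemma pathVal_continuous (f : OmegaSpace) : Continuous (pathVal f) := by
  unfold pathVal
  exact (map_continuous (f : C₀(ℝ,ℝ))).mul (by continuity)

lemma abs_pathVal_sub (f f' : OmegaSpace) (x : ℝ) :
    |pathVal f x - pathVal f' x| ≤ dist f f' * (1 + |x|) := by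
  unfold pathVal
  rw [← sub_mul, abs_mul, abs_of_nonneg (by positivity : (0:ℝ) ≤ 1 + |x|)]
  have h : dist ((f:C₀(ℝ,ℝ)) x) ((f':C₀(ℝ,ℝ)) x) ≤ dist (f:C₀(ℝ,ℝ)) (f':C₀(ℝ,ℝ)) := by
    rw [← ZeroAtInftyContinuousMap.dist_toBCF_eq_dist (f := (f:C₀(ℝ,ℝ))) (g := (f':C₀(ℝ,ℝ)))]
    exact BoundedContinuousFunction.dist_coe_le_dist (f := (f:C₀(ℝ,ℝ)).toBCF) (g := (f':C₀(ℝ,ℝ)).toBCF) x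
  rw [Subtype.dist_eq]
  have h2 : |((f:C₀(ℝ,ℝ)) x - (f':C₀(ℝ,ℝ)) x)| ≤ dist (f:C₀(ℝ,ℝ)) (f':C₀(ℝ,ℝ)) := by
    simpa [Real.dist_eq] using h
  exact mul_le_mul_of_nonneg_right h2 (by positivity)

lemma abs_pathVal_le (f : OmegaSpace) (x : ℝ) :
    |pathVal f x| ≤ ‖(f : C₀(ℝ,ℝ))‖ * (1 + |x|) := by
  unfold pathVal
  rw [abs_mul, abs_of_nonneg (by positivity : (0:ℝ) ≤ 1 + |x|)]
  have h : ‖(f : C₀(ℝ,ℝ)) x‖ ≤ ‖(f : C₀(ℝ,ℝ))‖ := by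
    rw [← ZeroAtInftyContinuousMap.norm_toBCF_eq_norm (f := (f:C₀(ℝ,ℝ)))]
    exact BoundedContinuousFunction.norm_coe_le_norm (f:C₀(ℝ,ℝ)).toBCF x
  exact mul_le_mul_of_nonneg_right h (by positivity)

set_option maxHeartbeats 1000000 in
lemma approx (b c₁ c₂ : ℝ) (hb : 0 < b) (hc₂ : 0 < c₂) (hc : c₂ < c₁)
    (t : ℝ) (ht : b / (c₁ - c₂) ≤ t) (f : OmegaSpace)
    (hf : ∀ s ∈ Ioo (0 : ℝ) t, pathVal f (-s) - pathVal f (-t) ≥ b + c₂ * t - c₁ * s)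
    (η : ℝ) (hη : 0 < η) :
    ∃ t', b / (c₁ - c₂) < t' ∧ ∃ f' ∈ St b c₁ c₂ t', dist f f' < η := by
  have hc' : (0:ℝ) < c₁ - c₂ := sub_pos.2 hc
  have hc₁ : (0:ℝ) < c₁ := hc₂.trans hc
  have ht₀ : 0 < b / (c₁ - c₂) := div_pos hb hc'
  have htpos : 0 < t := lt_of_lt_of_le ht₀ ht
  have hbt : b ≤ (c₁ - c₂) * t := by
    rw [div_le_iff₀ hc'] at ht; linarith
  set F : ℝ → ℝ := fun s => pathVal f (-s) with hF
  have contF : Continuous F := (pathVal_continuous f).comp continuous_neg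
  -- Step 1 : choose κ
  obtain ⟨δ, hδpos, hδ⟩ := Metric.continuous_iff.mp contF t (η/8) (by positivity)
  set κ : ℝ := min (δ/2) (min (η/(8*c₂)) 1) with hκdef
  have hκ : 0 < κ := by positivity
  set t' : ℝ := t + κ with ht'def
  have hκδ : κ < δ := lt_of_le_of_lt (min_le_left _ _) (by linarith)
  have hκη : c₂ * κ ≤ η/8 := by
    have h1 : κ ≤ η/(8*c₂) := le_trans (min_le_right _ _) (min_le_left _ _)
    rw [le_div_iff₀ (by positivity)] at h1
    nlinarith
  have hFt : ∀ u ∈ Icc t t', |F u - F t| < η/8 := by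
    intro u hu
    have : dist u t < δ := by
      rw [Real.dist_eq, abs_of_nonneg (by linarith [hu.1])]
      have := hu.2
      simp only [ht'def] at this
      linarith
    simpa [Real.dist_eq] using hδ u this
  have hFtt' : ∀ u ∈ Icc t t', F u - F t' > -(η/4) := by
    intro u hu
    have h1 := abs_lt.1 (hFt u hu)
    have h2 := abs_lt.1 (hFt t' ⟨by linarith, le_refl _⟩)
    linarith [h1.1, h2.2]
  have hFtt'' : ∀ u ∈ Icc t t', F u - F t' > -(η/4) := hFtt'
  -- the deficit function
  set D : ℝ → ℝ := fun s => F s - F t' - (b + c₂*t' - c₁*s) with hD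
  have hD1 : ∀ s ∈ Ioo (0:ℝ) t', D s ≥ -(η/2) := by
    intro s hs
    by_cases hst : s < t
    · have h1 := hf s ⟨hs.1, hst⟩
      have h2 := hFtt' t ⟨le_refl _, by linarith⟩
      simp only [hD, ht'def]
      simp only [hF] at h1 h2 ⊢
      linarith
    · push_neg at hst
      have h2 := hFtt' s ⟨hst, le_of_lt hs.2⟩
      have h3 : c₁ * t ≤ c₁ * s := mul_le_mul_of_nonneg_left hst (le_of_lt hc₁)
      simp only [hD, ht'def]
      simp only [hF] at h2 ⊢
      nlinarith
  -- Step 2 : choose r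
  obtain ⟨δ', hδ'pos, hδ'⟩ := Metric.continuous_iff.mp contF t' ((c₁-c₂)*κ/2) (by positivity)
  set r : ℝ := min (δ'/2) (min ((c₁-c₂)*κ/(2*c₁)) (t'/2)) with hrdef
  have hκt' : 0 < t' := by simp only [ht'def]; linarith
  have hr : 0 < r := by
    apply lt_min (by linarith)
    apply lt_min (by positivity) (by linarith)
  have hrt' : r < t' := by
    have : r ≤ t'/2 := le_trans (min_le_right _ _) (min_le_right _ _)
    linarith
  have hrc : c₁ * r ≤ (c₁-c₂)*κ/2 := by
    have h1 : r ≤ (c₁-c₂)*κ/(2*c₁) := le_trans (min_le_right _ _) (min_le_left _ _)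
    rw [le_div_iff₀ (by positivity)] at h1
    nlinarith
  have hD2 : ∀ s, t' - r ≤ s → s < t' → D s ≥ 0 := by
    intro s hs1 hs2
    have hds : dist s t' < δ' := by
      rw [Real.dist_eq, abs_of_nonpos (by linarith)]
      have : r ≤ δ'/2 := min_le_left _ _
      linarith
    have h1 := abs_lt.1 (by simpa [Real.dist_eq] using hδ' s hds)
    have h3 : c₁ * (t' - r) ≤ c₁ * s := mul_le_mul_of_nonneg_left hs1 (le_of_lt hc₁)
    simp only [hD]
    simp only [hF] at h1 ⊢
    have ht'exp : c₁ * t' - c₂ * t' - b ≥ (c₁ - c₂) * κ := by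
      simp only [ht'def]; nlinarith
    nlinarith [h1.1]
  -- Step 3 : the perturbation
  set c : ℝ := 5*η/8 with hcdef
  have hcpos : 0 < c := by positivity
  set ψ : ℝ → ℝ := fun x => min 1 (max 0 ((r - t' - x)/r)) with hψdef
  have contψ : Continuous ψ := by
    apply continuous_const.min
    apply continuous_const.max
    fun_prop
  have ψ_nonneg : ∀ x, 0 ≤ ψ x := fun x => le_min zero_le_one (le_max_left _ _)
  have ψ_le_one : ∀ x, ψ x ≤ 1 := fun x => min_le_left _ _
  have ψ_zero : ∀ x, r - t' ≤ x → ψ x = 0 := by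
    intro x hx
    have h1 : (r - t' - x)/r ≤ 0 := div_nonpos_of_nonpos_of_nonneg (by linarith) (le_of_lt hr)
    simp only [hψdef]
    rw [max_eq_left h1, min_eq_right zero_le_one]
  have ψ_one : ∀ x, x ≤ -t' → ψ x = 1 := by
    intro x hx
    have h1 : (1:ℝ) ≤ (r - t' - x)/r := by
      rw [le_div_iff₀ hr]; linarith
    simp only [hψdef]
    rw [max_eq_right (by linarith), min_eq_left h1]
  have ψ_lt_one : ∀ x, -t' < x → ψ x < 1 := by
    intro x hx
    have h1 : (r - t' - x)/r < 1 := by rw [div_lt_one hr]; linarith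
    have h2 : max 0 ((r - t' - x)/r) < 1 := max_lt zero_lt_one h1
    simp only [hψdef]
    rw [min_eq_right (le_of_lt h2)]
    exact h2
  have contq : Continuous (fun x : ℝ => (-c * ψ x) / (1 + |x|)) := by
    apply Continuous.div (by fun_prop) (by fun_prop)
    intro x; positivity
  have hq0 : Tendsto (fun x : ℝ => (-c * ψ x) / (1 + |x|)) (cocompact ℝ) (𝓝 0) := by
    apply squeeze_zero_norm (a := fun x => c * (1 + |x|)⁻¹)
    · intro x
      rw [Real.norm_eq_abs, abs_div, abs_of_nonneg (show (0:ℝ) ≤ 1 + |x| by positivity),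
        div_eq_mul_inv]
      apply mul_le_mul_of_nonneg_right _ (by positivity)
      rw [abs_mul, abs_neg, abs_of_nonneg (le_of_lt hcpos), abs_of_nonneg (ψ_nonneg x)]
      nlinarith [ψ_le_one x]
    · have h1 : Tendsto (fun x:ℝ => |x|) (cocompact ℝ) atTop := by
        exact (tendsto_norm_cocompact_atTop (E := ℝ)).congr (fun x => Real.norm_eq_abs x)
      have h2 : Tendsto (fun x:ℝ => 1 + |x|) (cocompact ℝ) atTop :=
        tendsto_atTop_add_const_left _ 1 h1
      simpa only [mul_zero, Pi.inv_apply] using h2.inv_tendsto_atTop.const_mul c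
  obtain ⟨q, hq_apply⟩ : ∃ q : C₀(ℝ,ℝ), ∀ x, q x = (-c * ψ x) / (1 + |x|) :=
    ⟨⟨⟨fun x => (-c * ψ x) / (1 + |x|), contq⟩, hq0⟩, fun x => rfl⟩
  have hq00 : q 0 = 0 := by
    rw [hq_apply 0, ψ_zero 0 (by linarith)]
    simp
  have hf0 : (f : C₀(ℝ,ℝ)) 0 = 0 := f.2
  obtain ⟨f', hf'val⟩ : ∃ f' : OmegaSpace, (f' : C₀(ℝ,ℝ)) = (f : C₀(ℝ,ℝ)) + q := by
    refine ⟨⟨(f : C₀(ℝ,ℝ)) + q, ?_⟩, rfl⟩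
    show ((f : C₀(ℝ,ℝ)) + q) 0 = 0
    rw [ZeroAtInftyContinuousMap.add_apply, hf0, hq00, add_zero]
  have hpath : ∀ x, pathVal f' x = pathVal f x + (-c * ψ x) := by
    intro x
    simp only [pathVal]
    rw [hf'val, ZeroAtInftyContinuousMap.add_apply, add_mul, hq_apply x,
      div_mul_cancel₀ _ (show (1:ℝ) + |x| ≠ 0 by positivity)]
  have hqnorm : ‖q‖ ≤ c := by
    rw [← ZeroAtInftyContinuousMap.norm_toBCF_eq_norm (f := q)]
    apply BoundedContinuousFunction.norm_le (le_of_lt hcpos) |>.mpr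
    intro x
    have : ‖q.toBCF x‖ = ‖q x‖ := rfl
    rw [this, hq_apply x, Real.norm_eq_abs, abs_div,
      abs_of_nonneg (show (0:ℝ) ≤ 1 + |x| by positivity), div_le_iff₀ (by positivity),
      abs_mul, abs_neg, abs_of_nonneg (le_of_lt hcpos), abs_of_nonneg (ψ_nonneg x)]
    nlinarith [ψ_le_one x, abs_nonneg x]
  have hdist : dist f f' < η := by
    have h1 : dist f f' = ‖q‖ := by
      rw [Subtype.dist_eq, hf'val]
      exact dist_self_add_right q ((f : C₀(ℝ,ℝ)))
    rw [h1]
    calc ‖q‖ ≤ c := hqnorm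
    _ < η := by rw [hcdef]; linarith
  refine ⟨t', by linarith, f', ?_, hdist⟩
  intro s hs
  have hψt' : ψ (-t') = 1 := ψ_one _ (le_refl _)
  have hkey : pathVal f' (-s) - pathVal f' (-t')
      = D s + (b + c₂*t' - c₁*s) + c * (1 - ψ (-s)) := by
    rw [hpath, hpath, hψt']
    simp only [hD, hF]
    ring
  rw [hkey]
  by_cases hcase : s ≤ t' - r
  · have hψs : ψ (-s) = 0 := ψ_zero _ (by linarith)
    rw [hψs]
    have := hD1 s hs
    simp only [hcdef] at *
    linarith
  · push_neg at hcase
    have hDs := hD2 s (le_of_lt hcase) hs.2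
    have hψs : ψ (-s) < 1 := ψ_lt_one _ (by linarith [hs.2])
    nlinarith

set_option maxHeartbeats 1000000 in
lemma seqClosed (b c₁ c₂ : ℝ) (hb : 0 < b) (hc₂ : 0 < c₂) (hc : c₂ < c₁) :
    IsSeqClosed (⋃ t ∈ Ici (b / (c₁ - c₂)),
      {f : OmegaSpace | ∀ s ∈ Ioo (0 : ℝ) t,
        pathVal f (-s) - pathVal f (-t) ≥ b + c₂ * t - c₁ * s}) := by
  have hc' : (0:ℝ) < c₁ - c₂ := sub_pos.2 hc
  have hc₁ : (0:ℝ) < c₁ := hc₂.trans hc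
  set t₀ : ℝ := b / (c₁ - c₂) with ht₀def
  have ht₀ : 0 < t₀ := div_pos hb hc'
  intro fs f hmem hlim
  have hts : ∀ n, ∃ t, t₀ ≤ t ∧ ∀ s ∈ Ioo (0:ℝ) t,
      pathVal (fs n) (-s) - pathVal (fs n) (-t) ≥ b + c₂ * t - c₁ * s := by
    intro n
    have := hmem n
    simp only [mem_iUnion, mem_setOf_eq, mem_Ici, exists_prop] at this
    exact this
  choose ts hts1 hts2 using hts
  have hd : Tendsto (fun n => dist (fs n) f) atTop (𝓝 0) :=
    tendsto_iff_dist_tendsto_zero.mp hlim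
  -- decay of the limit at -∞
  have hzero : Tendsto ((f : C₀(ℝ,ℝ)) : ℝ → ℝ) atBot (𝓝 0) := by
    have h := (f : C₀(ℝ,ℝ)).zero_at_infty'
    exact h.mono_left (by rw [cocompact_eq_atBot_atTop]; exact le_sup_left)
  obtain ⟨X, hX⟩ : ∃ X, ∀ x ≤ X, |(f : C₀(ℝ,ℝ)) x| < c₂/8 := by
    have := (Metric.tendsto_nhds.mp hzero) (c₂/8) (by positivity)
    rw [eventually_atBot] at this
    obtain ⟨X, hX⟩ := this
    exact ⟨X, fun x hx => by simpa [Real.dist_eq] using hX x hx⟩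
  set A : ℝ := (‖(f : C₀(ℝ,ℝ))‖ + 1) * (1 + t₀) with hAdef
  have hA : 0 ≤ A := by positivity
  -- eventual bound on the times
  obtain ⟨N, hN⟩ : ∃ N, ∀ n ≥ N, dist (fs n) f < min 1 (c₂/8) := by
    have := hd.eventually (gt_mem_nhds (show (0:ℝ) < min 1 (c₂/8) by positivity))
    rw [eventually_atTop] at this
    exact this
  set T : ℝ := max (-X) (2*(A + c₁*t₀)/c₂ + 1) with hTdef
  have hT : ∀ n ≥ N, ts n ≤ T := by
    intro n hn
    by_contra hcon
    push_neg at hcon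
    have hdn := hN n hn
    have hdn1 : dist (fs n) f ≤ 1 := le_of_lt (lt_of_lt_of_le hdn (min_le_left _ _))
    have hdn2 : dist (fs n) f ≤ c₂/8 := le_of_lt (lt_of_lt_of_le hdn (min_le_right _ _))
    have htsn : t₀ ≤ ts n := hts1 n
    have hTn1 : -X ≤ T := le_max_left _ _
    have hTn2 : 2*(A + c₁*t₀)/c₂ + 1 ≤ T := le_max_right _ _
    -- h1 : value at -(t₀/2) is bounded by A
    have habs : |(-(t₀/2))| = t₀/2 := by rw [abs_neg, abs_of_nonneg (by linarith)]
    have f1 : pathVal (fs n) (-(t₀/2)) - pathVal f (-(t₀/2)) ≤ dist (fs n) f * (1 + t₀/2) := by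
      have := le_trans (le_abs_self _) (abs_pathVal_sub (fs n) f (-(t₀/2)))
      rwa [habs] at this
    have f2 : pathVal f (-(t₀/2)) ≤ ‖(f : C₀(ℝ,ℝ))‖ * (1 + t₀/2) := by
      have := le_trans (le_abs_self _) (abs_pathVal_le f (-(t₀/2)))
      rwa [habs] at this
    have h1 : pathVal (fs n) (-(t₀/2)) ≤ A := by
      have hg0 : (0:ℝ) ≤ ‖(f : C₀(ℝ,ℝ))‖ := norm_nonneg _
      rw [hAdef]; nlinarith
    -- h2 : the defining inequality at s = t₀/2
    have h2 := hts2 n (t₀/2) ⟨by linarith, by linarith⟩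
    -- h3 : transfer to f
    have habs2 : |(-(ts n))| = ts n := by rw [abs_neg, abs_of_nonneg (by linarith)]
    have f3 : pathVal f (-(ts n)) - pathVal (fs n) (-(ts n)) ≤ (c₂/8) * (1 + ts n) := by
      have h := le_trans (le_abs_self _) (abs_pathVal_sub f (fs n) (-(ts n)))
      rw [habs2, dist_comm] at h
      have : (0:ℝ) ≤ 1 + ts n := by linarith
      nlinarith
    -- h4 : lower bound on pathVal f (-(ts n)) from decay
    have f4 : -(c₂/8) * (1 + ts n) ≤ pathVal f (-(ts n)) := by
      have hXn : -(ts n) ≤ X := by linarith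
      have hg := hX (-(ts n)) hXn
      have hg' : -(c₂/8) ≤ (f : C₀(ℝ,ℝ)) (-(ts n)) := by
        have := abs_lt.1 hg
        linarith [this.1]
      have : pathVal f (-(ts n)) = (f : C₀(ℝ,ℝ)) (-(ts n)) * (1 + ts n) := by
        simp only [pathVal]; rw [habs2]
      rw [this]
      have hpos : (0:ℝ) ≤ 1 + ts n := by linarith
      nlinarith
    have key : 2*(A + c₁*t₀) ≤ c₂ * (ts n - 1) := by
      have h5 : 2*(A + c₁*t₀)/c₂ < ts n - 1 := by linarith
      rw [div_lt_iff₀ hc₂] at h5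
      nlinarith
    have hc₁t₀ : 0 < c₁ * t₀ := mul_pos hc₁ ht₀
    nlinarith [hc₁t₀, f1, f2, f3, f4, key, h1, h2]
  -- extract a convergent subsequence of times
  have hτmem : ∀ k, ts (k + N) ∈ Icc t₀ T := fun k => ⟨hts1 _, hT _ (Nat.le_add_left _ _)⟩
  obtain ⟨tstar, htstar, φ, hφmono, hφtend⟩ :=
    (isCompact_Icc (a := t₀) (b := T)).tendsto_subseq hτmem
  refine mem_iUnion₂.mpr ⟨tstar, htstar.1, ?_⟩
  intro s hs
  set m : ℕ → ℕ := fun k => φ k + N with hmdef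
  have hm : Tendsto m atTop atTop :=
    (tendsto_add_atTop_nat N).comp hφmono.tendsto_atTop
  have hτφ : Tendsto (fun k => ts (m k)) atTop (𝓝 tstar) := hφtend
  have hflim : Tendsto (fun k => fs (m k)) atTop (𝓝 f) := hlim.comp hm
  have hdk : Tendsto (fun k => dist (fs (m k)) f) atTop (𝓝 0) :=
    tendsto_iff_dist_tendsto_zero.mp hflim
  have E1 : Tendsto (fun k => pathVal (fs (m k)) (-s)) atTop (𝓝 (pathVal f (-s))) := by
    rw [tendsto_iff_dist_tendsto_zero]
    apply squeeze_zero (g := fun k => dist (fs (m k)) f * (1 + |(-s)|)) (fun k => dist_nonneg)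
      (fun k => by
        rw [Real.dist_eq]
        exact abs_pathVal_sub (fs (m k)) f (-s))
    simpa only [zero_mul] using hdk.mul_const (1 + |(-s)|)
  have E2 : Tendsto (fun k => pathVal (fs (m k)) (-(ts (m k)))) atTop (𝓝 (pathVal f (-tstar))) := by
    have P1 : Tendsto (fun k => pathVal (fs (m k)) (-(ts (m k))) - pathVal f (-(ts (m k))))
        atTop (𝓝 0) := by
      have hbnd : Tendsto (fun k => dist (fs (m k)) f * (1 + |(-(ts (m k)))|)) atTop (𝓝 0) := by
        have hcont : Tendsto (fun k => 1 + |(-(ts (m k)))|) atTop (𝓝 (1 + |(-tstar)|)) := by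
          exact ((continuous_const.add (continuous_abs.comp continuous_neg)).tendsto tstar).comp hτφ
        simpa only [zero_mul] using hdk.mul hcont
      exact squeeze_zero_norm
        (fun k => by
          rw [Real.norm_eq_abs]
          exact abs_pathVal_sub (fs (m k)) f (-(ts (m k)))) hbnd
    have P2 : Tendsto (fun k => pathVal f (-(ts (m k)))) atTop (𝓝 (pathVal f (-tstar))) :=
      ((pathVal_continuous f).tendsto _).comp hτφ.neg
    have := P1.add P2
    rw [zero_add] at this
    simpa only [sub_add_cancel] using this
  have E3 : Tendsto (fun k => b + c₂ * ts (m k) - c₁ * s) atTop (𝓝 (b + c₂ * tstar - c₁ * s)) := by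
    exact ((hτφ.const_mul c₂).const_add b).sub_const (c₁ * s)
  have hev : ∀ᶠ k in atTop, b + c₂ * ts (m k) - c₁ * s
      ≤ pathVal (fs (m k)) (-s) - pathVal (fs (m k)) (-(ts (m k))) := by
    filter_upwards [hτφ.eventually (eventually_gt_nhds hs.2)] with k hk
    exact hts2 (m k) s ⟨hs.1, hk⟩
  exact le_of_tendsto_of_tendsto E3 (E1.sub E2) hev

/-- Equation (33) of the paper: the closure of S = ⋃_{t > t₀} S^t in (Ω, ‖·‖_Ω) is the
union over t ≥ t₀ of the closures of the S^t (t₀ = b/(c₁ − c₂)). -/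
theorem closure_S (b c₁ c₂ : ℝ) (hb : 0 < b) (hc₂ : 0 < c₂) (hc : c₂ < c₁) :
    closure (⋃ t ∈ Ioi (b / (c₁ - c₂)), St b c₁ c₂ t) =
      ⋃ t ∈ Ici (b / (c₁ - c₂)),
        {f : OmegaSpace | ∀ s ∈ Ioo (0 : ℝ) t,
          pathVal f (-s) - pathVal f (-t) ≥ b + c₂ * t - c₁ * s} := by
  apply Subset.antisymm
  · apply closure_minimal
    · refine iUnion₂_subset fun t ht => ?_
      intro f hf
      exact mem_iUnion₂.mpr ⟨t, (le_of_lt ht : b / (c₁ - c₂) ≤ t), fun s hs => le_of_lt (hf s hs)⟩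
    · exact (seqClosed b c₁ c₂ hb hc₂ hc).isClosed
  · refine iUnion₂_subset fun t ht f hf => ?_
    rw [Metric.mem_closure_iff]
    intro η hη
    obtain ⟨t', ht', f', hf', hdist⟩ := approx b c₁ c₂ hb hc₂ hc t ht f hf η hη
    exact ⟨f', mem_iUnion₂.mpr ⟨t', ht', hf'⟩, hdist⟩
end

section
/- Let f : [0,∞) → ℝ be continuous with f(0) = 0 and f(t)/t → 0 as t → ∞. Then sup_{t ≥ 0}(f(t) − c₂t) − sup_{s ≥ 0}(f(s) − c₁s) > b if and only if there exists t ≥ 0 such that f(t) − f(s) > b + c₂t − c₁s for all s ∈ [0,t]; moreover, any such t necessarily satisfies t > t₀ = b/(c₁−c₂). (This is the deterministic content of the representation of the second queue of the tandem system: the second-queue content exceeds b exactly when the cumulative input path admits such an epoch t, where f(t) plays the role of the amount of input over the last t time units.) -/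
open Set Filter

lemma tandem_aux (c : ℝ) (hc : 0 < c) (f : ℝ → ℝ) (hf : ContinuousOn f (Ici 0))
    (hf0 : f 0 = 0) (hlim : Tendsto (fun t => f t / t) atTop (nhds 0)) :
    ∃ t ∈ Ici (0:ℝ), (∀ s ∈ Ici (0:ℝ), f s - c * s ≤ f t - c * t) ∧
      sSup ((fun s => f s - c * s) '' Ici 0) = f t - c * t := by
  have hev : ∀ᶠ t in atTop, f t / t < c := hlim.eventually_lt_const hc
  obtain ⟨T, hT⟩ := hev.exists_forall_of_atTop
  set T' := max T 1 with hT'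
  have hT'1 : (1:ℝ) ≤ T' := le_max_right _ _
  have htail : ∀ s, T' ≤ s → f s - c * s < 0 := by
    intro s hs
    have hs0 : 0 < s := lt_of_lt_of_le one_pos (hT'1.trans hs)
    have h1 : f s / s < c := hT s ((le_max_left _ _).trans hs)
    have : f s < c * s := by
      have := (div_lt_iff₀ hs0).mp h1
      linarith [this]
    linarith
  have hcpt : IsCompact (Icc (0:ℝ) T') := isCompact_Icc
  have hcont : ContinuousOn (fun s => f s - c * s) (Icc 0 T') := by
    apply ContinuousOn.sub (hf.mono (Icc_subset_Ici_self)) (Continuous.continuousOn (by continuity))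
  obtain ⟨t, htmem, htmax⟩ := hcpt.exists_isMaxOn ⟨0, le_refl 0, by linarith⟩ hcont
  refine ⟨t, htmem.1, ?_, ?_⟩
  · intro s hs
    rcases le_or_gt s T' with h | h
    · exact htmax ⟨hs, h⟩
    · have h1 : f s - c * s < 0 := htail s h.le
      have h2 : f 0 - c * 0 ≤ f t - c * t := htmax ⟨le_refl 0, by linarith⟩
      rw [hf0] at h2
      linarith
  · have hmax : ∀ s ∈ Ici (0:ℝ), f s - c * s ≤ f t - c * t := by
      intro s hs
      rcases le_or_gt s T' with h | h
      · exact htmax ⟨hs, h⟩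
      · have h1 : f s - c * s < 0 := htail s h.le
        have h2 : f 0 - c * 0 ≤ f t - c * t := htmax ⟨le_refl 0, by linarith⟩
        rw [hf0] at h2
        linarith
    apply le_antisymm
    · refine csSup_le ⟨f 0 - c * 0, 0, self_mem_Ici, rfl⟩ ?_
      rintro x ⟨s, hs, rfl⟩
      exact hmax s hs
    · refine le_csSup ⟨f t - c * t, ?_⟩ ⟨t, htmem.1, rfl⟩
      rintro x ⟨s, hs, rfl⟩
      exact hmax s hs

/-- Deterministic content of Lemma 2.4 (representation (10)): for a continuous input path
f on [0,∞) with f 0 = 0 and f(t)/t → 0, the second-queue content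
sup_{t≥0}(f(t) − c₂t) − sup_{s≥0}(f(s) − c₁s) exceeds b iff there is an epoch t ≥ 0 with
f(t) − f(s) > b + c₂t − c₁s for all s ∈ [0,t]; moreover any such t satisfies
t > t₀ = b/(c₁ − c₂). -/
theorem tandem_representation (b c₁ c₂ : ℝ) (hb : 0 < b) (hc₂ : 0 < c₂) (hc : c₂ < c₁)
    (f : ℝ → ℝ) (hf : ContinuousOn f (Ici 0)) (hf0 : f 0 = 0)
    (hlim : Tendsto (fun t => f t / t) atTop (nhds 0)) :
    (sSup ((fun t => f t - c₂ * t) '' Ici 0) - sSup ((fun s => f s - c₁ * s) '' Ici 0) > b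
      ↔ ∃ t ≥ (0 : ℝ), ∀ s ∈ Icc (0 : ℝ) t, f t - f s > b + c₂ * t - c₁ * s)
    ∧ ∀ t ≥ (0 : ℝ), (∀ s ∈ Icc (0 : ℝ) t, f t - f s > b + c₂ * t - c₁ * s) →
        t > b / (c₁ - c₂) := by
  obtain ⟨t₁, ht₁0, ht₁max, hA⟩ := tandem_aux c₂ hc₂ f hf hf0 hlim
  obtain ⟨s₁, hs₁0, hs₁max, hB⟩ := tandem_aux c₁ (hc₂.trans hc) f hf hf0 hlim
  constructor
  · rw [hA, hB]
    constructor
    · intro h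
      refine ⟨t₁, ht₁0, fun s hs => ?_⟩
      have := hs₁max s hs.1
      linarith
    · rintro ⟨t, ht0, h⟩
      rcases le_or_gt s₁ t with hle | hlt
      · have h1 := h s₁ ⟨hs₁0, hle⟩
        have h2 := ht₁max t ht0
        linarith
      · have h1 := h t ⟨ht0, le_refl t⟩
        have h2 := ht₁max s₁ hs₁0
        have h3 : (c₁ - c₂) * t < (c₁ - c₂) * s₁ := by nlinarith
        nlinarith
  · intro t ht0 h
    have h1 := h t ⟨ht0, le_refl t⟩
    rw [gt_iff_lt, div_lt_iff₀ (by linarith : (0:ℝ) < c₁ - c₂)]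
    nlinarith
end

section
/- Suppose Assumption 3.3 holds for the variance function v. Then for every t ≥ t₀ = b/(c₁−c₂) and every s ∈ [0,t], one has (√v(t) − √v(t−s))·(b + c₂t) ≤ √v(t)·c₁s. (Equivalently: inequality (16) of the paper holds for no s ∈ (0,t) when t > t₀.) -/
open Set

/-- Under Assumption 3.3 (√v is C² on [0,∞), strictly increasing and strictly concave),
for every t ≥ t₀ = b/(c₁−c₂) and s ∈ [0,t] one has
(√v(t) − √v(t−s))·(b + c₂t) ≤ √v(t)·c₁s, i.e. inequality (16) of the paper fails for all
s ∈ (0,t) when t > t₀. -/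
theorem eq16_fails (b c₁ c₂ : ℝ) (hb : 0 < b) (hc₂ : 0 < c₂) (hc : c₂ < c₁)
    (v : ℝ → ℝ) (hv0 : v 0 = 0) (hvpos : ∀ u > 0, 0 < v u)
    (hvcont : ContinuousOn v (Ici 0))
    (hC2 : ContDiffOn ℝ 2 (fun u => Real.sqrt (v u)) (Ici 0))
    (hmono : StrictMonoOn (fun u => Real.sqrt (v u)) (Ici 0))
    (hconc : StrictConcaveOn ℝ (Ici 0) (fun u => Real.sqrt (v u))) :
    ∀ t, b / (c₁ - c₂) ≤ t → ∀ s ∈ Icc (0 : ℝ) t,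
      (Real.sqrt (v t) - Real.sqrt (v (t - s))) * (b + c₂ * t) ≤
        Real.sqrt (v t) * (c₁ * s) := by
  intro t ht s hs
  obtain ⟨hs0, hst⟩ := hs
  have hcc : 0 < c₁ - c₂ := sub_pos.mpr hc
  have ht0 : 0 < t := lt_of_lt_of_le (div_pos hb hcc) ht
  set f : ℝ → ℝ := fun u => Real.sqrt (v u) with hf
  -- concavity estimate: f (t - s) ≥ (1 - s/t) * f t
  have hcon : ConcaveOn ℝ (Ici 0) f := hconc.concaveOn
  have ha : (0:ℝ) ≤ (t - s) / t := div_nonneg (sub_nonneg.mpr hst) ht0.le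
  have hb' : (0:ℝ) ≤ s / t := div_nonneg hs0 ht0.le
  have hab : (t - s) / t + s / t = 1 := by field_simp; ring
  have hkey := hcon.2 (mem_Ici.mpr ht0.le) (mem_Ici.mpr le_rfl) ha hb' hab
  have h0 : f 0 = 0 := by simp [hf, hv0]
  have hts : (t - s) / t * t = t - s := by field_simp
  simp only [smul_eq_mul, h0, mul_zero, add_zero] at hkey
  rw [hts] at hkey
  -- so f t - f (t - s) ≤ (s/t) * f t
  have hft : 0 ≤ f t := Real.sqrt_nonneg _
  have h1 : f t - f (t - s) ≤ s / t * f t := by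
    have : f t - f (t - s) ≤ f t - (t - s) / t * f t := by linarith
    calc f t - f (t - s) ≤ f t - (t - s) / t * f t := this
      _ = s / t * f t := by field_simp; ring
  -- and b + c₂ t ≤ c₁ t
  have h2 : b + c₂ * t ≤ c₁ * t := by
    have := (div_le_iff₀ hcc).mp ht
    nlinarith
  have hpos : (0:ℝ) < b + c₂ * t := by positivity
  calc (f t - f (t - s)) * (b + c₂ * t)
      ≤ (s / t * f t) * (b + c₂ * t) := mul_le_mul_of_nonneg_right h1 hpos.le
    _ ≤ (s / t * f t) * (c₁ * t) := by
        apply mul_le_mul_of_nonneg_left h2 (by positivity)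
    _ = f t * (c₁ * s) := by field_simp
end

section
/- Fix t > t₀ = b/(c₁−c₂) and s ∈ (0,t). Assume Assumption 3.3 holds for v and that the 2×2 matrix Σ(t−s,t) with diagonal entries v(t), v(t−s) and off-diagonal entries Γ(t−s,t) is positive definite. Then the infimum of Λ(y,z) = ½(y,z)Σ(t−s,t)^{-1}(y,z)^T over the set {(y,z) ∈ ℝ² : y ≥ b + c₂t, z ≥ b + c₂t − c₁s} equals Υ(s,t), where Υ(s,t) = Λ(b + c₂t, b + c₂t − c₁s) if k(s,t) > c₁s, and Υ(s,t) = (b + c₂t)²/(2v(t)) if k(s,t) ≤ c₁s. -/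
open Set Matrix
noncomputable section

/-- Γ(s,t) = (v(t) − v(t−s) + v(s))/2, the covariance Cov(A(t), A(s)) (for 0 ≤ s ≤ t). -/
def Gam (v : ℝ → ℝ) (s t : ℝ) : ℝ := (v t - v (t - s) + v s) / 2

/-- k(s,t) = Γ(s,t)(b + c₂t)/v(t). -/
def kvf (b c₂ : ℝ) (v : ℝ → ℝ) (s t : ℝ) : ℝ := Gam v s t * (b + c₂ * t) / v t

/-- The covariance matrix Σ(t−s, t): diagonal entries v(t), v(t−s), off-diagonal entries
Γ(t−s,t) = (v(t) − v(s) + v(t−s))/2. -/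
def SigTS (v : ℝ → ℝ) (s t : ℝ) : Matrix (Fin 2) (Fin 2) ℝ :=
  !![v t, (v t - v s + v (t - s)) / 2; (v t - v s + v (t - s)) / 2, v (t - s)]

/-- Λ(y,z) = ½ (y,z) Σ(t−s,t)⁻¹ (y,z)ᵀ. -/
def Lam (v : ℝ → ℝ) (s t y z : ℝ) : ℝ :=
  (1 / 2) * (![y, z] ⬝ᵥ ((SigTS v s t)⁻¹ *ᵥ ![y, z]))

lemma two_by_two_quad (a bb c y z : ℝ) (hd : a * bb - c ^ 2 ≠ 0) :
    (1 / 2) * (![y, z] ⬝ᵥ ((!![a, c; c, bb])⁻¹ *ᵥ ![y, z]))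
      = (bb * y ^ 2 - 2 * c * y * z + a * z ^ 2) / (2 * (a * bb - c ^ 2)) := by
  have hdet : (!![a, c; c, bb]).det = a * bb - c ^ 2 := by
    simp [Matrix.det_fin_two_of]; ring
  rw [Matrix.inv_def, Matrix.adjugate_fin_two_of, Ring.inverse_eq_inv, hdet]
  simp [Matrix.mulVec, dotProduct, Fin.sum_univ_two]
  field_simp
  ring



/-- corner optimality -/
lemma aux_corner (A B C y₀ z₀ y z : ℝ) (hA : 0 < A) (hdet : C ^ 2 < A * B)
    (hG1 : C * z₀ ≤ B * y₀) (hG2 : C * y₀ < A * z₀) (hy : y₀ ≤ y) (hz : z₀ ≤ z) :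
    B * y₀ ^ 2 - 2 * C * y₀ * z₀ + A * z₀ ^ 2 ≤ B * y ^ 2 - 2 * C * y * z + A * z ^ 2 := by
  nlinarith [mul_nonneg (sub_nonneg.2 hy) (sub_nonneg.2 hG1),
    mul_nonneg (sub_nonneg.2 hz) (sub_nonneg.2 hG2.le),
    sq_nonneg (A * (z - z₀) - C * (y - y₀)),
    mul_nonneg (sub_nonneg.2 hdet.le) (sq_nonneg (y - y₀)), hA,
    mul_nonneg (sub_nonneg.2 hy) (sub_nonneg.2 hz)]

/-- edge lower bound -/
lemma aux_edge (A B C y₀ y z : ℝ) (hA : 0 < A) (hdet : C ^ 2 < A * B)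
    (hy₀ : 0 < y₀) (hy : y₀ ≤ y) :
    y₀ ^ 2 * (2 * (A * B - C ^ 2)) ≤ (B * y ^ 2 - 2 * C * y * z + A * z ^ 2) * (2 * A) := by
  nlinarith [sq_nonneg (A * z - C * y),
    mul_nonneg (sub_nonneg.2 hdet.le) (sub_nonneg.2 (mul_self_le_mul_self hy₀.le hy))]

/-- the key inequality using concavity -/
lemma aux_CzBy (v : ℝ → ℝ) (hv0 : v 0 = 0)
    (hconc : StrictConcaveOn ℝ (Ici 0) (fun u => Real.sqrt (v u)))
    (c₁ s t y₀ z₀ C : ℝ) (hs0 : 0 < s) (hst : s < t) (hc₁ : 0 < c₁)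
    (hA : 0 < v t) (hB : 0 < v (t - s)) (hdet : C ^ 2 < v t * v (t - s))
    (hy₀ : 0 < y₀) (hy0t : y₀ < c₁ * t) (hz : z₀ = y₀ - c₁ * s)
    (hkC : C * y₀ < v t * z₀) : C * z₀ ≤ v (t - s) * y₀ := by
  have ht0 : 0 < t := hs0.trans hst
  rcases le_or_gt C 0 with hC | hC
  · rcases le_or_gt 0 z₀ with hz0 | hz0
    · nlinarith [mul_pos hB hy₀, mul_nonpos_of_nonpos_of_nonneg hC hz0]
    · nlinarith [mul_le_mul_of_nonpos_left hkC.le hC,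
        mul_pos (sub_pos.2 hdet) hy₀, hA]
  · by_contra hcon
    push_neg at hcon
    have hz0 : 0 < z₀ := by nlinarith [mul_pos hC hy₀]
    have e1 : (C * y₀) * (v (t - s) * y₀) < (v t * z₀) * (C * z₀) :=
      mul_lt_mul'' hkC hcon (by positivity) (by positivity)
    have h1 : v (t - s) * y₀ ^ 2 < v t * z₀ ^ 2 := by nlinarith [e1, hC]
    have hsq : Real.sqrt (v (t - s)) * y₀ < Real.sqrt (v t) * z₀ := by
      have q := Real.sqrt_lt_sqrt (by positivity) h1
      rwa [Real.sqrt_mul hB.le, Real.sqrt_mul hA.le, Real.sqrt_sq hy₀.le,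
        Real.sqrt_sq hz0.le] at q
    have hcc : (t - s) / t * Real.sqrt (v t) < Real.sqrt (v (t - s)) := by
      have hq := hconc.2 (self_mem_Ici (a := (0:ℝ))) (ht0.le : t ∈ Ici (0:ℝ)) (ne_of_lt ht0)
        (div_pos hs0 ht0) (div_pos (by linarith : (0:ℝ) < t - s) ht0) (by field_simp; ring)
      simp only [smul_eq_mul, mul_zero, hv0, Real.sqrt_zero, zero_add] at hq
      rwa [div_mul_cancel₀ _ ht0.ne'] at hq
    have hcc2 : (t - s) * Real.sqrt (v t) < t * Real.sqrt (v (t - s)) := by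
      rw [div_mul_eq_mul_div, div_lt_iff₀ ht0] at hcc
      linarith [hcc]
    have hsA : 0 < Real.sqrt (v t) := Real.sqrt_pos.2 hA
    have hsB : 0 < Real.sqrt (v (t - s)) := Real.sqrt_pos.2 hB
    rw [hz] at hsq
    rcases le_or_gt (Real.sqrt (v t) - Real.sqrt (v (t - s))) 0 with hdf | hdf
    · have h3 : y₀ * (Real.sqrt (v t) - Real.sqrt (v (t - s))) ≤ 0 :=
        mul_nonpos_of_nonneg_of_nonpos hy₀.le hdf
      nlinarith [mul_pos (mul_pos hc₁ hs0) hsA]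
    · have h4 : t * (Real.sqrt (v t) - Real.sqrt (v (t - s))) < s * Real.sqrt (v t) := by
        nlinarith [hcc2]
      nlinarith [mul_lt_mul_of_pos_right hy0t hdf, mul_lt_mul_of_pos_left h4 hc₁]

/-- Lemma 3.4: under Assumption 3.3, for t > t₀ and s ∈ (0,t), the infimum of Λ over
{y ≥ b + c₂t, z ≥ b + c₂t − c₁s} equals Υ(s,t), which is Λ(b+c₂t, b+c₂t−c₁s) if
k(s,t) > c₁s and (b+c₂t)²/(2v(t)) if k(s,t) ≤ c₁s. -/
theorem lemma_3_4 (b c₁ c₂ : ℝ) (hb : 0 < b) (hc₂ : 0 < c₂) (hc : c₂ < c₁)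
    (v : ℝ → ℝ) (hv0 : v 0 = 0) (hvpos : ∀ u > 0, 0 < v u)
    (hvcont : ContinuousOn v (Ici 0))
    (hC2 : ContDiffOn ℝ 2 (fun u => Real.sqrt (v u)) (Ici 0))
    (hmono : StrictMonoOn (fun u => Real.sqrt (v u)) (Ici 0))
    (hconc : StrictConcaveOn ℝ (Ici 0) (fun u => Real.sqrt (v u)))
    (s t : ℝ) (ht : b / (c₁ - c₂) < t) (hs : s ∈ Ioo (0 : ℝ) t)
    (hPD : (SigTS v s t).PosDef) :
    sInf ((fun p : ℝ × ℝ => Lam v s t p.1 p.2) ''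
        {p : ℝ × ℝ | b + c₂ * t ≤ p.1 ∧ b + c₂ * t - c₁ * s ≤ p.2}) =
      if c₁ * s < kvf b c₂ v s t then Lam v s t (b + c₂ * t) (b + c₂ * t - c₁ * s)
      else (b + c₂ * t) ^ 2 / (2 * v t) := by
  obtain ⟨hs0, hst⟩ := hs
  have ht0 : 0 < t := hs0.trans hst
  have hts : 0 < t - s := sub_pos.2 hst
  have hA : 0 < v t := hvpos t ht0
  have hB : 0 < v (t - s) := hvpos _ hts
  have hc₁ : 0 < c₁ := hc₂.trans hc
  have hdetpos : ((v t - v s + v (t - s)) / 2) ^ 2 < v t * v (t - s) := by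
    have h := hPD.det_pos
    rw [SigTS, Matrix.det_fin_two_of] at h
    nlinarith [h]
  have hD : (0:ℝ) < v t * v (t - s) - ((v t - v s + v (t - s)) / 2) ^ 2 := by linarith
  have hLam : ∀ y z : ℝ, Lam v s t y z
      = (v (t - s) * y ^ 2 - 2 * ((v t - v s + v (t - s)) / 2) * y * z + v t * z ^ 2)
        / (2 * (v t * v (t - s) - ((v t - v s + v (t - s)) / 2) ^ 2)) := by
    intro y z
    have h := two_by_two_quad (v t) (v (t - s)) ((v t - v s + v (t - s)) / 2) y z hD.ne'
    simpa [Lam, SigTS] using h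
  have hy₀ : 0 < b + c₂ * t := by positivity
  have hy0t : b + c₂ * t < c₁ * t := by
    have h1 : b < t * (c₁ - c₂) := (div_lt_iff₀ (sub_pos.2 hc)).1 ht
    nlinarith [h1]
  have hkiff : c₁ * s < kvf b c₂ v s t ↔
      ((v t - v s + v (t - s)) / 2) * (b + c₂ * t) < v t * (b + c₂ * t - c₁ * s) := by
    rw [kvf, Gam, lt_div_iff₀ hA]
    constructor <;> intro h <;> nlinarith [h]
  split_ifs with hk
  · have hkC := hkiff.1 hk
    have hCz := aux_CzBy v hv0 hconc c₁ s t (b + c₂ * t) (b + c₂ * t - c₁ * s)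
      ((v t - v s + v (t - s)) / 2) hs0 hst hc₁ hA hB hdetpos hy₀ hy0t rfl hkC
    refine IsLeast.csInf_eq ⟨⟨(b + c₂ * t, b + c₂ * t - c₁ * s), ⟨le_refl _, le_refl _⟩, rfl⟩, ?_⟩
    rintro x ⟨⟨y, z⟩, ⟨hy, hz⟩, rfl⟩
    simp only at hy hz ⊢
    rw [hLam, hLam, div_le_div_iff_of_pos_right (by positivity)]
    exact aux_corner (v t) (v (t - s)) _ _ _ y z hA hdetpos hCz hkC hy hz
  · have hkC : v t * (b + c₂ * t - c₁ * s) ≤ ((v t - v s + v (t - s)) / 2) * (b + c₂ * t) := by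
      by_contra h
      push_neg at h
      exact hk (hkiff.2 h)
    refine IsLeast.csInf_eq
      ⟨⟨(b + c₂ * t, ((v t - v s + v (t - s)) / 2) * (b + c₂ * t) / v t),
        ⟨le_refl _, (le_div_iff₀ hA).2 (by linarith [hkC])⟩, ?_⟩, ?_⟩
    · show Lam v s t _ _ = _
      have hAne : v t ≠ 0 := hA.ne'
      rw [hLam, div_eq_div_iff (by positivity) (by positivity)]
      field_simp
      ring
    · rintro x ⟨⟨y, z⟩, ⟨hy, hz⟩, rfl⟩
      simp only at hy hz ⊢
      rw [hLam, div_le_div_iff₀ (by positivity) (by positivity)]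
      exact aux_edge (v t) (v (t - s)) _ _ y z hA hdetpos hy₀ hy


end
end

section
/- Fix 0 < s < t with t > t₀ = b/(c₁−c₂). Assume the 2×2 matrices Σ(t−s,t) (diagonal v(t), v(t−s); off-diagonal Γ(t−s,t)) and Σ(s,t) (diagonal v(t), v(s); off-diagonal Γ(s,t)) are both positive definite. Then Υ(s,t) = (b + c₂t)²/(2v(t)) + (max{k(s,t) − c₁s, 0})² / (2(v(s) − Γ(s,t)²/v(t))). In particular, when k(s,t) > c₁s this expresses Λ(b + c₂t, b + c₂t − c₁s) as the sum of the single-queue cost (b+c₂t)²/(2v(t)) and the term (k(s,t) − c₁s)²/(2(v(s) − Γ(s,t)²/v(t))). -/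
open Set Matrix
noncomputable section

/-- The covariance matrix Σ(s, t): diagonal entries v(t), v(s), off-diagonal Γ(s,t). -/
def SigM (v : ℝ → ℝ) (s t : ℝ) : Matrix (Fin 2) (Fin 2) ℝ :=
  !![v t, Gam v s t; Gam v s t, v s]

/-- Corollary 3.6 (decomposition):
Υ(s,t) = (b+c₂t)²/(2v(t)) + (max{k(s,t) − c₁s, 0})² / (2(v(s) − Γ(s,t)²/v(t))). -/
theorem cor_3_6 (b c₁ c₂ : ℝ) (hb : 0 < b) (hc₂ : 0 < c₂) (hc : c₂ < c₁)
    (v : ℝ → ℝ) (hv0 : v 0 = 0) (hvpos : ∀ u > 0, 0 < v u)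
    (hvcont : ContinuousOn v (Ici 0))
    (s t : ℝ) (hs : 0 < s) (hst : s < t) (ht : b / (c₁ - c₂) < t)
    (hPD1 : (SigTS v s t).PosDef) (hPD2 : (SigM v s t).PosDef) :
    (if c₁ * s < kvf b c₂ v s t then Lam v s t (b + c₂ * t) (b + c₂ * t - c₁ * s)
      else (b + c₂ * t) ^ 2 / (2 * v t)) =
      (b + c₂ * t) ^ 2 / (2 * v t) +
        (max (kvf b c₂ v s t - c₁ * s) 0) ^ 2 / (2 * (v s - (Gam v s t) ^ 2 / v t)) := by
  have hvt : 0 < v t := hvpos t (hs.trans hst)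
  have hdet2 : 0 < (SigM v s t).det := hPD2.det_pos
  have hdetM : (SigM v s t).det = v t * v s - Gam v s t ^ 2 := by
    simp [SigM, Matrix.det_fin_two_of]; ring
  have hD : 0 < v t * v s - Gam v s t ^ 2 := hdetM ▸ hdet2
  have hden : v s - Gam v s t ^ 2 / v t = (v t * v s - Gam v s t ^ 2) / v t := by
    field_simp
  have hLam : ∀ y z : ℝ, Lam v s t y z =
      (1/2) * ((v (t-s) * y^2 - 2 * ((v t - v s + v (t-s))/2) * y * z + v t * z^2)
        / (v t * v s - Gam v s t ^ 2)) := by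
    intro y z
    rw [Lam, Matrix.inv_def]
    simp only [SigTS, Matrix.det_fin_two_of, Matrix.adjugate_fin_two_of]
    have hd : v t * v (t-s) - (v t - v s + v (t-s))/2 * ((v t - v s + v (t-s))/2)
        = v t * v s - Gam v s t ^ 2 := by
      rw [Gam]; ring
    rw [hd, Ring.inverse_eq_inv']
    simp only [Matrix.smul_mulVec, Matrix.mulVec, dotProduct,
      Fin.sum_univ_two, Matrix.cons_val', Matrix.cons_val_zero, Matrix.cons_val_one,
      Matrix.head_cons, Matrix.empty_val', Matrix.cons_val_fin_one, Matrix.head_fin_const,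
      Matrix.smul_cons, smul_eq_mul, Matrix.smul_empty, Matrix.of_apply, Matrix.smul_apply]
    field_simp
    ring
  by_cases hk : c₁ * s < kvf b c₂ v s t
  · rw [if_pos hk, hLam]
    have hmax : max (kvf b c₂ v s t - c₁ * s) 0 = kvf b c₂ v s t - c₁ * s :=
      max_eq_left (by linarith)
    rw [hmax, kvf]
    set y := b + c₂ * t
    set G := Gam v s t with hG
    have hk2 : G * y / v t - c₁ * s = (v t * (y - c₁ * s) - (v t - G) * y) / v t := by
      field_simp; ring
    rw [hk2, hden]
    have hGam' : (v t - v s + v (t-s))/2 = v t - G := by rw [hG, Gam]; ring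
    have hvts : v (t-s) = v t + v s - 2 * G := by rw [hG, Gam]; ring
    rw [hGam', hvts, div_pow, div_div]
    field_simp
    ring
  · rw [if_neg hk]
    have hmax : max (kvf b c₂ v s t - c₁ * s) 0 = 0 := max_eq_right (by push_neg at hk; linarith)
    rw [hmax]
    norm_num

end
end

section
/- For b, c > 0 and H ∈ (0,1), the function t ↦ (b + ct)²/(2t^{2H}) on (0,∞) attains its minimum uniquely at t = (b/c)·H/(1−H), and the minimum value equals ½·(b/(1−H))^{2−2H}·(c/H)^{2H}. -/
open Set

/-- For fractional Brownian motion input (v(t) = t^{2H}), the single-FIFO-queue cost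
t ↦ (b + ct)²/(2t^{2H}) on (0,∞) attains its minimum uniquely at t = (b/c)·H/(1−H),
with minimum value ½(b/(1−H))^{2−2H}(c/H)^{2H}. -/
theorem fbm_fifo_min (b c H : ℝ) (hb : 0 < b) (hc : 0 < c) (hH : H ∈ Ioo (0 : ℝ) 1) :
    (∀ t ∈ Ioi (0 : ℝ),
        (1 / 2) * (b / (1 - H)) ^ (2 - 2 * H) * (c / H) ^ (2 * H) ≤
          (b + c * t) ^ 2 / (2 * t ^ (2 * H)))
    ∧ (b + c * (b / c * (H / (1 - H)))) ^ 2 / (2 * (b / c * (H / (1 - H))) ^ (2 * H)) =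
        (1 / 2) * (b / (1 - H)) ^ (2 - 2 * H) * (c / H) ^ (2 * H)
    ∧ ∀ t ∈ Ioi (0 : ℝ),
        (b + c * t) ^ 2 / (2 * t ^ (2 * H)) =
            (1 / 2) * (b / (1 - H)) ^ (2 - 2 * H) * (c / H) ^ (2 * H) →
          t = b / c * (H / (1 - H)) := by
  obtain ⟨hH0, hH1⟩ := hH
  have hh : 0 < 1 - H := by linarith
  set T : ℝ := b / c * (H / (1 - H)) with hTdef
  have hT : 0 < T := by positivity
  set M : ℝ := (1 / 2) * (b / (1 - H)) ^ (2 - 2 * H) * (c / H) ^ (2 * H) with hM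
  have hMpos : 0 < M := by positivity
  -- key identity
  have key : ∀ t : ℝ, 0 < t →
      (b + c * t) ^ 2 / (2 * t ^ (2 * H)) =
        M * ((1 - H + H * (t / T)) ^ 2 / (t / T) ^ (2 * H)) := by
    intro t ht
    set s : ℝ := t / T with hsdef
    have hs : 0 < s := div_pos ht hT
    have hts : t = T * s := by
      rw [hsdef, mul_div_cancel₀ _ hT.ne']
    have hb_ct : b + c * t = (b / (1 - H)) * (1 - H + H * s) := by
      rw [hts, hTdef]; field_simp
    have ht2H : t ^ (2 * H) = T ^ (2 * H) * s ^ (2 * H) := by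
      rw [hts]; exact Real.mul_rpow hT.le hs.le
    have e1 : (b / (1 - H)) ^ (2 : ℕ) =
        (b / (1 - H)) ^ (2 - 2 * H) * (b / (1 - H)) ^ (2 * H) := by
      rw [← Real.rpow_natCast (b / (1 - H)) 2, ← Real.rpow_add (by positivity)]
      norm_num
    have e2 : (b / (1 - H)) ^ (2 * H) = (c / H) ^ (2 * H) * T ^ (2 * H) := by
      rw [← Real.mul_rpow (by positivity) hT.le]
      congr 1
      rw [hTdef]; field_simp
    have h1 : (0 : ℝ) < T ^ (2 * H) := Real.rpow_pos_of_pos hT _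
    have h2 : (0 : ℝ) < s ^ (2 * H) := Real.rpow_pos_of_pos hs _
    rw [hb_ct, ht2H, mul_pow, e1, e2, hM]
    field_simp
  -- Bernoulli facts
  have bern : ∀ s : ℝ, 0 < s → s ^ H ≤ 1 - H + H * s := by
    intro s hs
    have h := rpow_one_add_le_one_add_mul_self (s := s - 1) (by linarith) hH0.le hH1.le
    have : (1 : ℝ) + (s - 1) = s := by ring
    rw [this] at h
    linarith [h]
  have bern' : ∀ s : ℝ, 0 < s → s ≠ 1 → s ^ H < 1 - H + H * s := by
    intro s hs hs1
    have h := rpow_one_add_lt_one_add_mul_self (s := s - 1) (by linarith)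
      (by intro h; exact hs1 (by linarith)) hH0 hH1
    have : (1 : ℝ) + (s - 1) = s := by ring
    rw [this] at h
    linarith [h]
  have sq2H : ∀ s : ℝ, 0 < s → s ^ (2 * H) = (s ^ H) ^ (2 : ℕ) := by
    intro s hs
    rw [← Real.rpow_natCast (s ^ H) 2, ← Real.rpow_mul hs.le]
    ring_nf
  refine ⟨?_, ?_, ?_⟩
  · intro t ht
    have ht' : 0 < t := ht
    rw [key t ht']
    set s : ℝ := t / T with hsdef
    have hs : 0 < s := div_pos ht' hT
    have h2 : (0 : ℝ) < s ^ (2 * H) := Real.rpow_pos_of_pos hs _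
    have hsH : (0 : ℝ) < s ^ H := Real.rpow_pos_of_pos hs _
    have hX : (1 : ℝ) ≤ (1 - H + H * s) ^ 2 / s ^ (2 * H) := by
      rw [one_le_div h2, sq2H s hs]
      have := bern s hs
      nlinarith [hsH]
    exact le_mul_of_one_le_right hMpos.le hX
  · rw [key T hT]
    have : T / T = 1 := div_self hT.ne'
    rw [this]
    simp [Real.one_rpow]
  · intro t ht heq
    have ht' : 0 < t := ht
    rw [key t ht'] at heq
    set s : ℝ := t / T with hsdef
    have hs : 0 < s := div_pos ht' hT
    have h2 : (0 : ℝ) < s ^ (2 * H) := Real.rpow_pos_of_pos hs _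
    have hsH : (0 : ℝ) < s ^ H := Real.rpow_pos_of_pos hs _
    have hX : (1 - H + H * s) ^ 2 / s ^ (2 * H) = 1 :=
      mul_left_cancel₀ hMpos.ne' (heq.trans (mul_one M).symm)
    have hsq : (1 - H + H * s) ^ 2 = (s ^ H) ^ (2 : ℕ) := by
      rw [← sq2H s hs]
      field_simp at hX
      rw [mul_comm 2 H]
      linarith [hX]
    have hs1 : s = 1 := by
      by_contra hne
      have := bern' s hs hne
      nlinarith [hsH]
    rw [hsdef, div_eq_one_iff_eq hT.ne'] at hs1
    exact hs1
end

section
/- Let v(t) = t (standard Brownian motion) and b > 0, c₁ > c₂ > 0. Then inf_{t > t₀} sup_{s ∈ (0,t)} Υ(s,t) equals 2bc₂ if c₁ ≥ 2c₂, and equals bc₁²/(2(c₁ − c₂)) if c₂ < c₁ < 2c₂. -/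
open Set Matrix
noncomputable section

/-- Υ(s,t): Λ(b+c₂t, b+c₂t−c₁s) if k(s,t) > c₁s, else (b+c₂t)²/(2v(t)). -/
def Ups (b c₁ c₂ : ℝ) (v : ℝ → ℝ) (s t : ℝ) : ℝ :=
  if c₁ * s < kvf b c₂ v s t then Lam v s t (b + c₂ * t) (b + c₂ * t - c₁ * s)
  else (b + c₂ * t) ^ 2 / (2 * v t)

private lemma sup_eq (b c₁ c₂ t : ℝ) (hb : 0 < b) (hc₂ : 0 < c₂) (hc : c₂ < c₁)
    (ht : b / (c₁ - c₂) < t) :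
    sSup ((fun s => Ups b c₁ c₂ (fun u => u) s t) '' Ioo (0 : ℝ) t)
      = (b + c₂ * t) ^ 2 / (2 * t) := by
  have hd : 0 < c₁ - c₂ := sub_pos.2 hc
  have ht0 : 0 < t := lt_trans (div_pos hb hd) ht
  have hbt : b < t * (c₁ - c₂) := (div_lt_iff₀ hd).1 ht
  have hUps : ∀ s ∈ Ioo (0:ℝ) t, Ups b c₁ c₂ (fun u => u) s t
      = (b + c₂ * t) ^ 2 / (2 * t) := by
    intro s hs
    have hs0 : 0 < s := hs.1
    have hcond : ¬ (c₁ * s < kvf b c₂ (fun u => u) s t) := by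
      unfold kvf Gam
      simp only
      rw [not_lt, div_le_iff₀ ht0]
      nlinarith
    rw [Ups, if_neg hcond]
  calc sSup ((fun s => Ups b c₁ c₂ (fun u => u) s t) '' Ioo (0:ℝ) t)
      = sSup ((fun _ => (b + c₂ * t) ^ 2 / (2 * t)) '' Ioo (0:ℝ) t) := by
        rw [Set.image_congr hUps]
    _ = sSup {(b + c₂ * t) ^ 2 / (2 * t)} := by
        rw [Set.Nonempty.image_const (nonempty_Ioo.2 ht0)]
    _ = (b + c₂ * t) ^ 2 / (2 * t) := csSup_singleton _

/-- For standard Brownian motion (v(t) = t), the tandem lower bound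
inf_{t>t₀} sup_{s∈(0,t)} Υ(s,t) equals 2bc₂ when c₁ ≥ 2c₂, and bc₁²/(2(c₁−c₂)) when
c₂ < c₁ < 2c₂. -/
theorem bm_tandem (b c₁ c₂ : ℝ) (hb : 0 < b) (hc₂ : 0 < c₂) (hc : c₂ < c₁) :
    (2 * c₂ ≤ c₁ →
      sInf ((fun t => sSup ((fun s => Ups b c₁ c₂ (fun u => u) s t) '' Ioo (0 : ℝ) t)) ''
          Ioi (b / (c₁ - c₂))) = 2 * b * c₂)
    ∧ (c₁ < 2 * c₂ →
      sInf ((fun t => sSup ((fun s => Ups b c₁ c₂ (fun u => u) s t) '' Ioo (0 : ℝ) t)) ''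
          Ioi (b / (c₁ - c₂))) = b * c₁ ^ 2 / (2 * (c₁ - c₂))) := by
  have hd : 0 < c₁ - c₂ := sub_pos.2 hc
  have ht₀ : 0 < b / (c₁ - c₂) := div_pos hb hd
  have himg : ((fun t => sSup ((fun s => Ups b c₁ c₂ (fun u => u) s t) '' Ioo (0 : ℝ) t)) ''
      Ioi (b / (c₁ - c₂))) = (fun t => (b + c₂ * t) ^ 2 / (2 * t)) '' Ioi (b / (c₁ - c₂)) :=
    Set.image_congr (fun t ht => sup_eq b c₁ c₂ t hb hc₂ hc ht)
  rw [himg]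
  set f : ℝ → ℝ := fun t => (b + c₂ * t) ^ 2 / (2 * t) with hf
  have hbdd : BddBelow (f '' Ioi (b / (c₁ - c₂))) := by
    refine ⟨0, ?_⟩
    rintro x ⟨t, ht, rfl⟩
    have ht0 : 0 < t := lt_trans ht₀ ht
    positivity
  have hne : (f '' Ioi (b / (c₁ - c₂))).Nonempty :=
    ⟨f (b / (c₁ - c₂) + 1), ⟨_, by simp [lt_add_of_pos_right _ one_pos, mem_Ioi], rfl⟩⟩
  constructor
  · intro h2
    apply le_antisymm
    · refine le_of_forall_pos_le_add (fun ε hε => ?_)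
      set δ := Real.sqrt (2 * b * ε / c₂ ^ 3) with hδ
      have hδpos : 0 < δ := Real.sqrt_pos.2 (by positivity)
      have hδ2 : δ ^ 2 = 2 * b * ε / c₂ ^ 3 := Real.sq_sqrt (by positivity)
      set t := b / c₂ + δ with htdef
      have htmem : t ∈ Ioi (b / (c₁ - c₂)) := by
        have h1 : b / (c₁ - c₂) ≤ b / c₂ := by
          apply div_le_div_of_nonneg_left hb.le hc₂
          linarith
        exact lt_of_le_of_lt h1 (lt_add_of_pos_right _ hδpos)
      refine le_trans (csInf_le hbdd ⟨t, htmem, rfl⟩) ?_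
      have ht0 : 0 < t := by positivity
      have hbt : c₂ * t = b + c₂ * δ := by rw [htdef]; field_simp
      have h1 : c₂ ^ 2 * δ ^ 2 ≤ 2 * ε * t := by
        have he : c₂ ^ 2 * δ ^ 2 = 2 * ε * (b / c₂) := by
          rw [hδ2]; field_simp
        have hle : b / c₂ ≤ t := by rw [htdef]; linarith
        rw [he]
        exact mul_le_mul_of_nonneg_left hle (by positivity)
      rw [hf]
      simp only
      rw [div_le_iff₀ (by positivity)]
      have hbt2 : (c₂ * t) ^ 2 = (b + c₂ * δ) ^ 2 := by rw [hbt]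
      have hbt3 : b * (c₂ * t) = b * (b + c₂ * δ) := by rw [hbt]
      nlinarith [h1, hbt2, hbt3]
    · refine le_csInf hne ?_
      rintro x ⟨t, ht, rfl⟩
      have ht0 : 0 < t := lt_trans ht₀ ht
      rw [hf]
      simp only
      rw [le_div_iff₀ (by positivity)]
      nlinarith [sq_nonneg (b - c₂ * t)]
  · intro h2
    apply le_antisymm
    · refine le_of_forall_pos_le_add (fun ε hε => ?_)
      set A : ℝ := c₂ ^ 2 + b * c₁ * (2 * c₂ - c₁) with hA
      have hApos : 0 < A := by nlinarith [mul_pos hb (mul_pos (lt_trans hc₂ hc) (sub_pos.2 h2))]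
      set u := min 1 (2 * b * (c₁ - c₂) * ε / A) with hu
      have hu0 : 0 < u := lt_min one_pos (by positivity)
      have hu1 : u ≤ 1 := min_le_left _ _
      have huA : A * u ≤ 2 * b * (c₁ - c₂) * ε := by
        have hm := min_le_right 1 (2 * b * (c₁ - c₂) * ε / A)
        calc A * u ≤ A * (2 * b * (c₁ - c₂) * ε / A) :=
              mul_le_mul_of_nonneg_left hm hApos.le
          _ = 2 * b * (c₁ - c₂) * ε := by field_simp
      set t := (b + u) / (c₁ - c₂) with htdef
      have htmem : t ∈ Ioi (b / (c₁ - c₂)) := by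
        rw [mem_Ioi, htdef]
        gcongr
        linarith
      refine le_trans (csInf_le hbdd ⟨t, htmem, rfl⟩) ?_
      have hbu : 0 < b + u := by linarith
      have ht0 : 0 < t := div_pos hbu hd
      have key : (b * c₁ + c₂ * u) ^ 2 ≤ (b + u) * (b * c₁ ^ 2 + 2 * (c₁ - c₂) * ε) := by
        nlinarith [huA, mul_pos (mul_pos hd hu0) hε,
          mul_nonneg (mul_nonneg (sq_nonneg c₂) hu0.le) (by linarith : (0:ℝ) ≤ 1 - u)]
      have hft : f t = (b * c₁ + c₂ * u) ^ 2 / (2 * (c₁ - c₂) * (b + u)) := by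
        rw [hf]; simp only; rw [htdef]
        rw [div_eq_div_iff (by positivity) (by positivity)]
        field_simp
        ring
      rw [hft, div_le_iff₀ (by positivity)]
      have hV : (b * c₁ ^ 2 / (2 * (c₁ - c₂)) + ε) * (2 * (c₁ - c₂) * (b + u))
          = (b + u) * (b * c₁ ^ 2 + 2 * (c₁ - c₂) * ε) := by
        field_simp
      rw [hV]
      exact key
    · refine le_csInf hne ?_
      rintro x ⟨t, ht, rfl⟩
      have ht0 : 0 < t := lt_trans ht₀ ht
      have hbt : b < t * (c₁ - c₂) := (div_lt_iff₀ hd).1 ht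
      rw [hf]
      simp only
      rw [div_le_div_iff₀ (by positivity) (by positivity)]
      nlinarith [mul_nonneg (mul_nonneg hc₂.le hc₂.le) (sq_nonneg (t * (c₁ - c₂) - b)),
        mul_nonneg (mul_nonneg hb.le (lt_trans hc₂ hc).le)
          (mul_nonneg (sub_pos.2 hbt).le (sub_pos.2 h2).le), hd]


end
end

section
/- Assume Assumption 3.3 holds for v and that for all 0 < s < t the 2×2 matrices Σ(t−s,t) and Σ(s,t) are positive definite. Let t_F ∈ (0,∞) be a global minimizer of L_{c₂}(t) = (b + c₂t)²/(2v(t)) over (0,∞), and suppose t_F > t₀ and c₁ ≥ sup_{s ∈ (0,t_F)} k(s,t_F)/s. Then inf_{t > t₀} sup_{s ∈ (0,t)} Υ(s,t) = L_{c₂}(t_F); that is, the tandem lower bound reduces to the single-FIFO-queue decay rate with service rate c₂. -/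
open Set Matrix
noncomputable section

lemma lam_eq_aux (a c g y z : ℝ) (ha : a ≠ 0) (hd : a*c - g^2 ≠ 0) :
    (1/2 : ℝ) * (![y,z] ⬝ᵥ ((!![a,g;g,c])⁻¹ *ᵥ ![y,z]))
      = y^2/(2*a) + (z - g*y/a)^2 * a / (2*(a*c - g^2)) := by
  have hdet : (!![a,g;g,c]).det = a*c - g^2 := by
    simp [Matrix.det_fin_two_of]; ring
  have hinv : (!![a,g;g,c])⁻¹ = (a*c - g^2)⁻¹ • !![c,-g;-g,a] := by
    rw [Matrix.inv_def, hdet, Matrix.adjugate_fin_two, Ring.inverse_eq_inv']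
    norm_num
  rw [hinv]
  simp [Matrix.smul_mulVec, Matrix.mulVec, dotProduct, Fin.sum_univ_two]
  field_simp
  ring

set_option maxHeartbeats 1000000 in
/-- Corollary 3.7 / equation (18): if t_F globally minimizes L_{c₂}(t) = (b+c₂t)²/(2v(t)),
t_F > t₀, and c₁ ≥ sup_{s∈(0,t_F)} k(s,t_F)/s, then the tandem lower bound
inf_{t>t₀} sup_{s∈(0,t)} Υ(s,t) equals L_{c₂}(t_F). -/
theorem cor_3_7 (b c₁ c₂ : ℝ) (hb : 0 < b) (hc₂ : 0 < c₂) (hc : c₂ < c₁)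
    (v : ℝ → ℝ) (hv0 : v 0 = 0) (hvpos : ∀ u > 0, 0 < v u)
    (hvcont : ContinuousOn v (Ici 0))
    (hC2 : ContDiffOn ℝ 2 (fun u => Real.sqrt (v u)) (Ici 0))
    (hmono : StrictMonoOn (fun u => Real.sqrt (v u)) (Ici 0))
    (hconc : StrictConcaveOn ℝ (Ici 0) (fun u => Real.sqrt (v u)))
    (hPD : ∀ s t : ℝ, 0 < s → s < t → (SigTS v s t).PosDef ∧ (SigM v s t).PosDef)
    (tF : ℝ) (htF0 : 0 < tF)
    (hglob : ∀ t ∈ Ioi (0 : ℝ),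
      (b + c₂ * tF) ^ 2 / (2 * v tF) ≤ (b + c₂ * t) ^ 2 / (2 * v t))
    (htF : b / (c₁ - c₂) < tF)
    (hc1F : ∀ s ∈ Ioo (0 : ℝ) tF, kvf b c₂ v s tF / s ≤ c₁) :
    sInf ((fun t => sSup ((fun s => Ups b c₁ c₂ v s t) '' Ioo (0 : ℝ) t)) ''
        Ioi (b / (c₁ - c₂))) = (b + c₂ * tF) ^ 2 / (2 * v tF) := by
  have hc₁₂ : 0 < c₁ - c₂ := sub_pos.2 hc
  have hc₁ : 0 < c₁ := hc₂.trans hc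
  have ht₀ : 0 < b / (c₁ - c₂) := div_pos hb hc₁₂
  set w : ℝ → ℝ := fun u => Real.sqrt (v u) with hw
  -- basic facts
  have hvnn : ∀ u, 0 ≤ u → 0 ≤ v u := by
    intro u hu
    rcases eq_or_lt_of_le hu with h | h
    · simp [← h, hv0]
    · exact (hvpos u h).le
  have hvsq : ∀ u, 0 ≤ u → v u = w u ^ 2 := by
    intro u hu; rw [hw]; simp [Real.sq_sqrt (hvnn u hu)]
  have hw0 : w 0 = 0 := by rw [hw]; simp [hv0]
  have hwpos : ∀ u, 0 < u → 0 < w u := fun u hu => Real.sqrt_pos.2 (hvpos u hu)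
  have hwnn : ∀ u, 0 ≤ w u := fun u => Real.sqrt_nonneg _
  have hwmono : ∀ a a' : ℝ, 0 ≤ a → a ≤ a' → w a ≤ w a' :=
    fun a a' h1 h2 => hmono.monotoneOn h1 (h1.trans h2) h2
  have hvmono : ∀ a a' : ℝ, 0 ≤ a → a ≤ a' → v a ≤ v a' := by
    intro a a' h1 h2
    rw [hvsq a h1, hvsq a' (h1.trans h2)]
    exact pow_le_pow_left₀ (hwnn a) (hwmono a a' h1 h2) 2
  have hdiffw : DifferentiableOn ℝ w (Ici 0) := hC2.differentiableOn two_ne_zero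
  have hwcont : ContinuousOn w (Ici 0) := hdiffw.continuousOn
  have hconcOn : ConcaveOn ℝ (Ici 0) w := hconc.concaveOn
  -- Gam nonneg, det positive, Gam ≤ w t * w s
  have hGnn : ∀ s t : ℝ, 0 < s → s < t → 0 ≤ Gam v s t := by
    intro s t h1 h2
    have := hvmono (t - s) t (by linarith) (by linarith)
    have := hvnn s h1.le
    unfold Gam; linarith
  have hdetM : ∀ s t : ℝ, 0 < s → s < t → 0 < v t * v s - Gam v s t ^ 2 := by
    intro s t h1 h2
    have hpd := (hPD s t h1 h2).2.det_pos
    rw [SigM, Matrix.det_fin_two_of] at hpd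
    nlinarith [hpd]
  have hGle : ∀ s t : ℝ, 0 < s → s < t → Gam v s t ≤ w t * w s := by
    intro s t h1 h2
    have hd := hdetM s t h1 h2
    rw [hvsq t (by linarith : (0:ℝ) ≤ t), hvsq s h1.le] at hd
    nlinarith [hGnn s t h1 h2, mul_nonneg (hwnn t) (hwnn s)]
  -- value of Ups in the branch case
  have hups_branch : ∀ s t : ℝ, 0 < s → s < t → c₁ * s < kvf b c₂ v s t →
      Ups b c₁ c₂ v s t = (b + c₂ * t) ^ 2 / (2 * v t) +
        (kvf b c₂ v s t - c₁ * s) ^ 2 * v t / (2 * (v t * v s - Gam v s t ^ 2)) := by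
    intro s t h1 h2 hbr
    have hvt : 0 < v t := hvpos t (h1.trans h2)
    have hdt := hdetM s t h1 h2
    have h3 : v t * v (t-s) - ((v t - v s + v (t-s))/2)^2 = v t * v s - Gam v s t ^ 2 := by
      unfold Gam; ring
    have h4 : (b + c₂ * t - c₁ * s - (v t - v s + v (t-s))/2 * (b + c₂*t) / v t)
        = kvf b c₂ v s t - c₁ * s := by
      unfold kvf Gam; field_simp; ring
    rw [Ups, if_pos hbr, Lam, SigTS]
    rw [lam_eq_aux (v t) (v (t-s)) ((v t - v s + v (t-s))/2) _ _ hvt.ne'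
      (by rw [h3]; exact hdt.ne')]
    rw [h3, h4]
  -- Ups ≥ L t
  have hups_ge : ∀ s t : ℝ, 0 < s → s < t →
      (b + c₂ * t) ^ 2 / (2 * v t) ≤ Ups b c₁ c₂ v s t := by
    intro s t h1 h2
    by_cases hbr : c₁ * s < kvf b c₂ v s t
    · rw [hups_branch s t h1 h2 hbr]
      have hvt : 0 < v t := hvpos t (h1.trans h2)
      have hdt := hdetM s t h1 h2
      have : 0 ≤ (kvf b c₂ v s t - c₁ * s) ^ 2 * v t / (2 * (v t * v s - Gam v s t ^ 2)) := by
        positivity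
      linarith
    · rw [Ups, if_neg hbr]
  -- strict chord inequality through 0
  have hchord : ∀ t : ℝ, 0 < t → ∀ s, 0 < s → s < t → s / t * w t < w s := by
    intro t ht0 s hs0 hst
    have h := hconc.2 (mem_Ici.2 le_rfl) (mem_Ici.2 ht0.le) (by exact fun h => ht0.ne' h.symm)
      (show 0 < 1 - s/t by rw [sub_pos]; exact (div_lt_one ht0).2 hst)
      (div_pos hs0 ht0) (show 1 - s/t + s/t = 1 by ring)
    have harg : (1 - s/t) • (0:ℝ) + (s/t) • t = s := by
      rw [smul_eq_mul, smul_eq_mul, mul_zero, zero_add]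
      field_simp
    rw [harg] at h
    have hw0' : w 0 = 0 := hw0
    simpa [hw0', smul_eq_mul] using h
  have hDpos : ∀ t : ℝ, 0 < t → ∀ s, 0 < s → s < t → 0 < w (t-s) + w s - w t := by
    intro t ht0 s hs0 hst
    have h1 := hchord t ht0 s hs0 hst
    have h2 := hchord t ht0 (t-s) (by linarith) (by linarith)
    have h3 : s/t*w t + (t-s)/t*w t = w t := by field_simp; ring
    linarith
  have hbdd : ∀ t : ℝ, b/(c₁-c₂) < t →
      BddAbove ((fun s => Ups b c₁ c₂ v s t) '' Ioo (0:ℝ) t) := by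
    intro t ht
    have ht0 : 0 < t := ht₀.trans ht
    have hyct : b + c₂*t < c₁*t := by rw [div_lt_iff₀ hc₁₂] at ht; nlinarith
    set y := b + c₂*t with hy_def
    have hy : (0:ℝ) < y := by rw [hy_def]; nlinarith
    set sp := y / c₁ with hsp_def
    have hsp0 : 0 < sp := div_pos hy hc₁
    have hspt : sp < t := (div_lt_iff₀ hc₁).2 (by linarith)
    set s₁ := min sp (t/3) with hs₁_def
    have hs₁0 : 0 < s₁ := lt_min hsp0 (by linarith)
    have hs₁sp : s₁ ≤ sp := min_le_left _ _
    have hs₁3 : s₁ ≤ t/3 := min_le_right _ _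
    have hs₁lt : s₁ < t - s₁ := by linarith
    set α := derivWithin w (Ici 0) s₁ with hα_def
    set β := derivWithin w (Ici 0) (t - s₁) with hβ_def
    have hαβ : β < α := hconc.strictAntiOn_derivWithin hdiffw
      (mem_Ici.2 hs₁0.le) (mem_Ici.2 (by linarith)) hs₁lt
    have hβ : 0 < β := by
      have hsl := hconcOn.slope_le_derivWithin (mem_Ici.2 (by linarith : (0:ℝ) ≤ t - s₁))
        (mem_Ici.2 ht0.le) (by linarith) (hdiffw _ (mem_Ici.2 (by linarith : (0:ℝ) ≤ t - s₁)))
      rw [slope_def_field] at hsl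
      have hlt : w (t - s₁) < w t := hmono (mem_Ici.2 (by linarith : (0:ℝ) ≤ t - s₁))
        (mem_Ici.2 ht0.le) (by linarith)
      have hden : (0:ℝ) < t - (t - s₁) := by linarith
      have : 0 < (w t - w (t - s₁)) / (t - (t - s₁)) := div_pos (by linarith) hden
      linarith
    have hα : 0 < α := hβ.trans hαβ
    set m := w (t - sp) with hm_def
    have hm : 0 < m := hwpos _ (by linarith)
    set Df := fun s => w (t - s) + w s - w t with hDf_def
    have hDcont : ContinuousOn Df (Icc s₁ sp) := by
      apply ContinuousOn.sub (ContinuousOn.add ?_ ?_) continuousOn_const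
      · exact hwcont.comp ((continuous_const.sub continuous_id).continuousOn)
          (fun x hx => mem_Ici.2 (by simp; linarith [hx.2]))
      · exact hwcont.mono (fun x hx => mem_Ici.2 (by linarith [hx.1])) |>.congr (fun x _ => rfl)
    obtain ⟨sm, hsmmem, hsmmin⟩ := isCompact_Icc.exists_isMinOn (nonempty_Icc.2 hs₁sp) hDcont
    have hd₁ : 0 < Df sm := hDpos t ht0 sm (by linarith [hsmmem.1]) (by linarith [hsmmem.2])
    set B₁ := y^2 * α / (w t * (α - β) * m) with hB₁_def
    set B₂ := y^2 / (Df sm * m) with hB₂_def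
    have hwt : 0 < w t := hwpos t ht0
    have hB₂0 : 0 ≤ B₂ := by positivity
    refine ⟨y^2/(2*v t) + max B₁ B₂, ?_⟩
    rintro x ⟨s, ⟨hs0, hst⟩, rfl⟩
    simp only
    by_cases hbr : c₁ * s < kvf b c₂ v s t
    · rw [hups_branch s t hs0 hst hbr]
      have hmax : (kvf b c₂ v s t - c₁ * s) ^ 2 * v t / (2 * (v t * v s - Gam v s t ^ 2))
          ≤ max B₁ B₂ := by
        have hvt := hvpos t ht0
        have hvs := hvpos s hs0
        have hws := hwpos s hs0
        have hwswt : w s ≤ w t := hwmono s t hs0.le hst.le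
        have hGle' := hGle s t hs0 hst
        have hGnn' := hGnn s t hs0 hst
        have hkle : kvf b c₂ v s t ≤ w s * y / w t := by
          unfold kvf
          rw [hvsq t ht0.le, div_le_div_iff₀ (by positivity) hwt]
          calc Gam v s t * y * w t ≤ (w t * w s) * y * w t :=
                mul_le_mul_of_nonneg_right (mul_le_mul_of_nonneg_right hGle' hy.le) hwt.le
            _ = w s * y * w t^2 := by ring
        have hwsy : w s * y / w t ≤ y := by
          rw [div_le_iff₀ hwt]
          calc w s * y ≤ w t * y := mul_le_mul_of_nonneg_right hwswt hy.le
            _ = y * w t := by ring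
        have hslt : s < sp := by
          rw [hsp_def, lt_div_iff₀ hc₁]
          have := hbr.trans_le (hkle.trans hwsy)
          linarith
        set u := w s * y / w t - c₁ * s with hu_def
        have hk0 : 0 < kvf b c₂ v s t - c₁ * s := by linarith
        have hku : kvf b c₂ v s t - c₁ * s ≤ u := by rw [hu_def]; linarith
        have hu0 : 0 < u := lt_of_lt_of_le hk0 hku
        have hDfs : 0 < Df s := hDpos t ht0 s hs0 hst
        set δ := w t * w s - Gam v s t with hδ_def
        have hδeq : δ = Df s * (w (t-s) + w t - w s) / 2 := by
          rw [hδ_def, hDf_def]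
          have hG : Gam v s t = ((w t)^2 - (w (t-s))^2 + (w s)^2)/2 := by
            unfold Gam
            rw [← hvsq t ht0.le, ← hvsq (t-s) (by linarith), ← hvsq s hs0.le]
          rw [hG]; ring
        have hδge : Df s * m ≤ 2 * δ := by
          have h2δ : 2*δ = Df s * (w (t-s) + w t - w s) := by rw [hδeq]; ring
          rw [h2δ]
          have h1 : m ≤ w (t-s) + w t - w s := by
            have := hwmono (t-sp) (t-s) (by linarith) (by linarith)
            rw [hm_def]; linarith
          exact mul_le_mul_of_nonneg_left h1 hDfs.le
        have hδ0 : 0 < δ := by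
          have := mul_pos hDfs hm
          linarith
        have hdtge : δ * (w t * w s) ≤ v t * v s - Gam v s t^2 := by
          rw [hvsq t ht0.le, hvsq s hs0.le, hδ_def]
          have h0 : 0 ≤ (w t * w s - Gam v s t) * Gam v s t :=
            mul_nonneg (sub_nonneg.2 hGle') hGnn'
          have hexp : w t^2 * w s^2 - Gam v s t^2 - (w t * w s - Gam v s t) * (w t * w s)
              = (w t * w s - Gam v s t) * Gam v s t := by ring
          linarith [h0, hexp]
        have hdt := hdetM s t hs0 hst
        have hextra : (kvf b c₂ v s t - c₁*s)^2 * v t / (2*(v t*v s - Gam v s t^2))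
            ≤ u * y / (Df s * m) := by
          have hkws : kvf b c₂ v s t - c₁ * s ≤ w s * y / w t := by
            have : 0 ≤ c₁ * s := by positivity
            linarith
          have hnum : (kvf b c₂ v s t - c₁*s)^2 * v t ≤ (u * (w s * y / w t)) * w t^2 := by
            rw [hvsq t ht0.le]
            have h1 : (kvf b c₂ v s t - c₁*s)^2 ≤ u * (w s * y / w t) := by
              calc (kvf b c₂ v s t - c₁*s)^2
                  = (kvf b c₂ v s t - c₁*s) * (kvf b c₂ v s t - c₁*s) := sq _
                _ ≤ u * (w s * y / w t) := mul_le_mul hku hkws hk0.le hu0.le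
            exact mul_le_mul_of_nonneg_right h1 (sq_nonneg (w t))
          calc (kvf b c₂ v s t - c₁*s)^2 * v t / (2*(v t*v s - Gam v s t^2))
              ≤ (u * (w s * y / w t)) * w t^2 / (2*(δ * (w t * w s))) := by
                refine div_le_div₀ (by positivity) hnum ?_ (by linarith [hdtge])
                have := mul_pos hδ0 (mul_pos hwt hws)
                linarith
            _ = u * y / (2*δ) := by
                rw [div_eq_div_iff (by positivity) (by linarith [mul_pos hδ0 (mul_pos hwt hws)])]
                field_simp
            _ ≤ u * y / (Df s * m) := by
                refine div_le_div_of_nonneg_left (by positivity) (mul_pos hDfs hm) (by linarith)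
        rcases le_total s s₁ with hss | hss
        · refine le_trans hextra (le_trans ?_ (le_max_left B₁ B₂))
          have hws_ge : α * s ≤ w s := by
            have h1 := hconcOn.derivWithin_le_slope (mem_Ici.2 le_rfl) (mem_Ici.2 hs0.le)
              hs0 (hdiffw s (mem_Ici.2 hs0.le))
            rw [slope_def_field, hw0] at h1
            have h2 : α ≤ derivWithin w (Ici 0) s := hconcOn.antitoneOn_derivWithin hdiffw
              (mem_Ici.2 hs0.le) (mem_Ici.2 hs₁0.le) hss
            have h3 : α ≤ (w s - 0)/(s - 0) := h2.trans h1
            rw [le_div_iff₀ (by linarith)] at h3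
            linarith
          have hsub : w t - w (t-s) ≤ β * s := by
            have h1 := hconcOn.slope_le_derivWithin (mem_Ici.2 (by linarith : (0:ℝ) ≤ t-s))
              (mem_Ici.2 ht0.le) (by linarith) (hdiffw _ (mem_Ici.2 (by linarith : (0:ℝ) ≤ t-s)))
            rw [slope_def_field] at h1
            have h2 : derivWithin w (Ici 0) (t-s) ≤ β := hconcOn.antitoneOn_derivWithin hdiffw
              (mem_Ici.2 (by linarith : (0:ℝ) ≤ t-s₁)) (mem_Ici.2 (by linarith : (0:ℝ) ≤ t-s))
              (by linarith)
            rw [show t - (t-s) = s by ring] at h1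
            have h3 : (w t - w (t-s))/s ≤ β := le_trans h1 h2
            rw [div_le_iff₀ hs0] at h3
            linarith
          have hDfs_eq : Df s = w (t-s) + w s - w t := rfl
          have hDf_ge : w s * (α - β) / α ≤ Df s := by
            have h4 : s ≤ w s / α := (le_div_iff₀ hα).2 (by linarith [hws_ge])
            have h5 : β * s ≤ β * (w s / α) := mul_le_mul_of_nonneg_left h4 hβ.le
            have h6 : w s * (α - β) / α = w s - β * (w s / α) := by
              field_simp
            rw [hDfs_eq]
            linarith [hsub, h5, h6]
          have hu_le : u ≤ w s * y / w t := by
            rw [hu_def]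
            have h7 : 0 ≤ c₁*s := by positivity
            linarith
          have hden_pos : 0 < (w s * (α-β)/α) * m :=
            mul_pos (div_pos (mul_pos hws (by linarith)) hα) hm
          calc u * y / (Df s * m)
              ≤ (w s * y / w t * y) / ((w s * (α-β)/α) * m) :=
                div_le_div₀ (by positivity) (mul_le_mul_of_nonneg_right hu_le hy.le)
                  hden_pos (mul_le_mul_of_nonneg_right hDf_ge hm.le)
            _ = B₁ := by
                rw [hB₁_def]
                rw [div_eq_div_iff hden_pos.ne' (mul_pos (mul_pos hwt (sub_pos.2 hαβ)) hm).ne']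
                field_simp [hws.ne', hwt.ne', hα.ne', hm.ne', (sub_pos.2 hαβ).ne']
        · refine le_trans hextra (le_trans ?_ (le_max_right B₁ B₂))
          have hDf_ge : Df sm ≤ Df s := hsmmin ⟨hss, hslt.le⟩
          have hule : u ≤ y := by
            rw [hu_def]
            have h7 : 0 ≤ c₁*s := by positivity
            linarith [hwsy]
          rw [hB₂_def]
          calc u * y / (Df s * m) ≤ y * y / (Df sm * m) := by
                apply div_le_div₀ (by positivity)
                  (mul_le_mul_of_nonneg_right hule hy.le) (by positivity)
                exact mul_le_mul_of_nonneg_right hDf_ge hm.le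
            _ = y^2 / (Df sm * m) := by ring_nf
      have hvt := hvpos t ht0
      linarith
    · rw [Ups, if_neg hbr]
      have : 0 ≤ max B₁ B₂ := le_trans hB₂0 (le_max_right _ _)
      linarith
  have hmem : ∀ t : ℝ, b/(c₁-c₂) < t →
      (b + c₂*t)^2/(2*v t) ∈ (fun s => Ups b c₁ c₂ v s t) '' Ioo (0:ℝ) t := by
    intro t ht
    have ht0 : 0 < t := ht₀.trans ht
    have hyct : b + c₂*t < c₁*t := by rw [div_lt_iff₀ hc₁₂] at ht; nlinarith
    have hy : (0:ℝ) < b + c₂*t := by nlinarith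
    set s₀ := ((b+c₂*t)/c₁ + t)/2 with hs₀
    have hsp0 : 0 < (b+c₂*t)/c₁ := div_pos hy hc₁
    have hspt : (b+c₂*t)/c₁ < t := (div_lt_iff₀ hc₁).2 (by linarith)
    have hs₀0 : 0 < s₀ := by rw [hs₀]; linarith
    have hs₀t : s₀ < t := by rw [hs₀]; linarith
    refine ⟨s₀, ⟨hs₀0, hs₀t⟩, ?_⟩
    have hknb : ¬ (c₁ * s₀ < kvf b c₂ v s₀ t) := by
      push_neg
      have hvt := hvpos t ht0
      have hkley : kvf b c₂ v s₀ t ≤ b + c₂*t := by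
        have h1 := hvmono s₀ t hs₀0.le hs₀t.le
        have h2 := hvnn (t - s₀) (by linarith)
        unfold kvf
        rw [div_le_iff₀ hvt]
        unfold Gam
        nlinarith
      have hlast : b + c₂*t ≤ c₁ * s₀ := by
        have h3 : (b+c₂*t)/c₁ < s₀ := by rw [hs₀]; linarith
        rw [div_lt_iff₀ hc₁] at h3; linarith
      linarith
    simp only [Ups, if_neg hknb]
  have hFtF : sSup ((fun s => Ups b c₁ c₂ v s tF) '' Ioo (0:ℝ) tF)
      = (b+c₂*tF)^2/(2*v tF) := by
    have himg : (fun s => Ups b c₁ c₂ v s tF) '' Ioo (0:ℝ) tF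
        = {(b+c₂*tF)^2/(2*v tF)} := by
      apply Subset.antisymm
      · rintro x ⟨s, hs, rfl⟩
        have h := hc1F s hs
        have h2 : kvf b c₂ v s tF ≤ c₁ * s := by
          rw [div_le_iff₀ hs.1] at h; linarith
        simp only [Ups, if_neg (not_lt.2 h2)]
        exact mem_singleton _
      · rintro x hx
        rw [mem_singleton_iff] at hx
        subst hx
        exact hmem tF htF
    rw [himg, csSup_singleton]
  have hlb : ∀ x ∈ (fun t => sSup ((fun s => Ups b c₁ c₂ v s t) '' Ioo (0:ℝ) t)) ''
      Ioi (b/(c₁-c₂)), (b+c₂*tF)^2/(2*v tF) ≤ x := by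
    rintro x ⟨t, ht, rfl⟩
    rw [mem_Ioi] at ht
    have ht0 : 0 < t := ht₀.trans ht
    calc (b+c₂*tF)^2/(2*v tF) ≤ (b+c₂*t)^2/(2*v t) := hglob t ht0
      _ ≤ _ := le_csSup (hbdd t ht) (hmem t ht)
  have hmemS : (b+c₂*tF)^2/(2*v tF) ∈ (fun t => sSup ((fun s => Ups b c₁ c₂ v s t) ''
      Ioo (0:ℝ) t)) '' Ioi (b/(c₁-c₂)) := ⟨tF, htF, hFtF⟩
  exact le_antisymm (csInf_le ⟨_, fun x hx => hlb x hx⟩ hmemS) (le_csInf ⟨_, hmemS⟩ hlb)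


end
end
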